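/- arXiv:2203.02695 — 10 statements merged into one kernel-verified Lean document; each statement's English description precedes it below -/
import Mathlib

section
/- For every natural number n, the number of isomorphism classes of interface-consistent starters on n points (discrete iposets (s,P,t):k→n with t bijective and s injective, up to iposet isomorphism) equals 2^n. -/
/-- A poset with interfaces (iposet): a finite strict poset on `Fin n`
together with injective source and target maps whose images lie in the
minimal respectively maximal elements. -/
structure Iposet where
  n : ℕ
  lt : Fin n → Fin n → Prop
  lt_irrefl : ∀ x, ¬ lt x x
  lt_trans : ∀ x y z, lt x y → lt y z → lt x z
  k : ℕ
  m : ℕ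
  s : Fin k → Fin n
  t : Fin m → Fin n
  s_inj : Function.Injective s
  t_inj : Function.Injective t
  s_min : ∀ i x, ¬ lt x (s i)
  t_max : ∀ i x, ¬ lt (t i) x

namespace Iposet

/-- Isomorphism of iposets: a poset isomorphism commuting with the
source and target maps. -/
def Iso (P Q : Iposet) : Prop :=
  ∃ (hk : P.k = Q.k) (hm : P.m = Q.m) (f : Fin P.n ≃ Fin Q.n),
    (∀ x y, P.lt x y ↔ Q.lt (f x) (f y)) ∧
    (∀ i, f (P.s i) = Q.s (Fin.cast hk i)) ∧
    (∀ i, f (P.t i) = Q.t (Fin.cast hm i))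

/-- Isomorphism of underlying posets (interfaces disregarded). -/
def PosetIso (P Q : Iposet) : Prop :=
  ∃ f : Fin P.n ≃ Fin Q.n, ∀ x y, P.lt x y ↔ Q.lt (f x) (f y)

def Discrete (P : Iposet) : Prop := ∀ x y, ¬ P.lt x y

def Starter (P : Iposet) : Prop := Discrete P ∧ Function.Bijective P.t

def Terminator (P : Iposet) : Prop := Discrete P ∧ Function.Bijective P.s

def Symmetry (P : Iposet) : Prop :=
  Discrete P ∧ Function.Bijective P.s ∧ Function.Bijective P.t

def InterfaceConsistent (P : Iposet) : Prop :=
  ∀ (i j : Fin P.k) (i' j' : Fin P.m),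
    P.s i = P.t i' → P.s j = P.t j' → ((i : ℕ) < (j : ℕ) ↔ (i' : ℕ) < (j' : ℕ))

def IsMinEl (P : Iposet) (x : Fin P.n) : Prop := ∀ y, ¬ P.lt y x
def IsMaxEl (P : Iposet) (x : Fin P.n) : Prop := ∀ y, ¬ P.lt x y

def LeftWink (P : Iposet) : Prop := ∀ x, IsMinEl P x ↔ ∃ i, P.s i = x
def RightWink (P : Iposet) : Prop := ∀ x, IsMaxEl P x ↔ ∃ i, P.t i = x
def Wink (P : Iposet) : Prop := LeftWink P ∧ RightWink P

/-- Witness data exhibiting `R` as the gluing composition `P * Q`. -/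
structure GluingData (P Q R : Iposet) where
  hg : P.m = Q.k
  hk : R.k = P.k
  hm : R.m = Q.m
  f : Fin P.n → Fin R.n
  g : Fin Q.n → Fin R.n
  f_inj : Function.Injective f
  g_inj : Function.Injective g
  cover : ∀ x, (∃ a, f a = x) ∨ (∃ b, g b = x)
  agree : ∀ i : Fin P.m, f (P.t i) = g (Q.s (Fin.cast hg i))
  overlap : ∀ a b, f a = g b → ∃ i, a = P.t i
  order : ∀ x y, R.lt x y ↔
      (∃ a b, f a = x ∧ f b = y ∧ P.lt a b) ∨
      (∃ a b, g a = x ∧ g b = y ∧ Q.lt a b) ∨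
      (∃ a b, f a = x ∧ g b = y ∧ (∀ i, a ≠ P.t i) ∧ (∀ j, b ≠ Q.s j))
  s_eq : ∀ i, R.s i = f (P.s (Fin.cast hk i))
  t_eq : ∀ i, R.t i = g (Q.t (Fin.cast hm i))

/-- `R` is (isomorphic to) the gluing composition `P * Q`. -/
def IsGluing (P Q R : Iposet) : Prop := Nonempty (GluingData P Q R)

/-- Witness data exhibiting `R` as the parallel composition `P ⊗ Q`. -/
structure ParData (P Q R : Iposet) where
  hk : R.k = P.k + Q.k
  hm : R.m = P.m + Q.m
  f : Fin P.n → Fin R.n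
  g : Fin Q.n → Fin R.n
  f_inj : Function.Injective f
  g_inj : Function.Injective g
  cover : ∀ x, (∃ a, f a = x) ∨ (∃ b, g b = x)
  disjoint : ∀ a b, f a ≠ g b
  order : ∀ x y, R.lt x y ↔
      (∃ a b, f a = x ∧ f b = y ∧ P.lt a b) ∨
      (∃ a b, g a = x ∧ g b = y ∧ Q.lt a b)
  s_eq₁ : ∀ i : Fin P.k, R.s (Fin.cast hk.symm (Fin.castAdd Q.k i)) = f (P.s i)
  s_eq₂ : ∀ i : Fin Q.k, R.s (Fin.cast hk.symm (Fin.natAdd P.k i)) = g (Q.s i)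
  t_eq₁ : ∀ i : Fin P.m, R.t (Fin.cast hm.symm (Fin.castAdd Q.m i)) = f (P.t i)
  t_eq₂ : ∀ i : Fin Q.m, R.t (Fin.cast hm.symm (Fin.natAdd P.m i)) = g (Q.t i)

/-- `R` is (isomorphic to) the parallel composition `P ⊗ Q`. -/
def IsPar (P Q R : Iposet) : Prop := Nonempty (ParData P Q R)

/-- Gluing-parallel iposets: built from the (four) iposets on a single
point by finitely many gluing and parallel compositions, or empty. -/
inductive GP : Iposet → Prop
  | empty (P : Iposet) : P.n = 0 → GP P
  | single (P : Iposet) : P.n = 1 → GP P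
  | glue (P Q R : Iposet) : GP P → GP Q → IsGluing P Q R → GP R
  | par (P Q R : Iposet) : GP P → GP Q → IsPar P Q R → GP R

end Iposet

namespace CountStarters

open Iposet Function

/-- Canonical interface-consistent starter associated to a subset of `Fin n`. -/
def canon (n : ℕ) (S : Finset (Fin n)) : Iposet where
  n := n
  lt _ _ := False
  lt_irrefl _ := not_false
  lt_trans _ _ _ h _ := h.elim
  k := S.card
  m := n
  s i := S.orderEmbOfFin rfl i
  t := id
  s_inj := (S.orderEmbOfFin rfl).injective
  t_inj := injective_id
  s_min _ _ h := h
  t_max _ _ h := h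

lemma canon_mem (n : ℕ) (S : Finset (Fin n)) : (canon n S).n = n ∧ Discrete (canon n S) ∧
    Function.Bijective (canon n S).t ∧ InterfaceConsistent (canon n S) := by
  refine ⟨rfl, fun _ _ h => h, bijective_id, ?_⟩
  intro i j i' j' hi hj
  have hsm := (S.orderEmbOfFin rfl).strictMono
  have key : (i : ℕ) < (j : ℕ) ↔ (S.orderEmbOfFin rfl i : ℕ) < (S.orderEmbOfFin rfl j : ℕ) := by
    constructor
    · intro h; exact hsm (show i < j from h)
    · intro h
      by_contra hc
      rcases lt_or_eq_of_le (not_lt.mp hc) with h' | h'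
      · exact absurd (hsm (show j < i from h')) (by omega)
      · have : i = j := Fin.ext h'.symm
        subst this; omega
  rw [key]
  have hi' : (S.orderEmbOfFin rfl i : Fin n) = i' := hi
  have hj' : (S.orderEmbOfFin rfl j : Fin n) = j' := hj
  rw [hi', hj']

/-- The invariant: the set of target positions hit by the source map. -/
def phi (n : ℕ) (P : Iposet) : Finset (Fin n) :=
  Finset.univ.filter fun x => ∃ (i' : Fin P.m) (j : Fin P.k), P.t i' = P.s j ∧ (i' : ℕ) = (x : ℕ)

lemma mem_phi {n : ℕ} {P : Iposet} {x : Fin n} :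
    x ∈ phi n P ↔ ∃ (i' : Fin P.m) (j : Fin P.k), P.t i' = P.s j ∧ (i' : ℕ) = (x : ℕ) := by
  simp [phi]

lemma phi_iso {n : ℕ} {P Q : Iposet} (h : Iso P Q) : phi n P = phi n Q := by
  obtain ⟨hk, hm, f, _, hs, ht⟩ := h
  ext x
  rw [mem_phi, mem_phi]
  constructor
  · rintro ⟨i', j, h1, h2⟩
    refine ⟨Fin.cast hm i', Fin.cast hk j, ?_, by simpa using h2⟩
    rw [← ht, ← hs, h1]
  · rintro ⟨i', j, h1, h2⟩
    refine ⟨Fin.cast hm.symm i', Fin.cast hk.symm j, f.injective ?_, by simpa using h2⟩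
    rw [ht, hs]
    have e1 : Fin.cast hm (Fin.cast hm.symm i') = i' := by ext; simp
    have e2 : Fin.cast hk (Fin.cast hk.symm j) = j := by ext; simp
    rw [e1, e2, h1]

lemma m_eq {n : ℕ} {P : Iposet} (hn : P.n = n) (ht : Function.Bijective P.t) : P.m = n := by
  have := Fintype.card_of_bijective ht
  simpa [hn] using this

/-- The map `Fin P.k → Fin n` given by `t⁻¹ ∘ s`. -/
noncomputable def gmap {n : ℕ} {P : Iposet} (hn : P.n = n) (ht : Function.Bijective P.t)
    (j : Fin P.k) : Fin n :=
  Fin.cast (m_eq hn ht) ((Equiv.ofBijective P.t ht).symm (P.s j))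

lemma t_gmap {n : ℕ} {P : Iposet} (hn : P.n = n) (ht : Function.Bijective P.t) (j : Fin P.k) :
    P.t (Fin.cast (m_eq hn ht).symm (gmap hn ht j)) = P.s j := by
  have e : (Fin.cast (m_eq hn ht).symm (gmap hn ht j)) =
      (Equiv.ofBijective P.t ht).symm (P.s j) := by ext; simp [gmap]
  rw [e]
  exact (Equiv.ofBijective P.t ht).apply_symm_apply (P.s j)

lemma gmap_inj {n : ℕ} {P : Iposet} (hn : P.n = n) (ht : Function.Bijective P.t) :
    Function.Injective (gmap hn ht) := by
  intro a b hab
  apply P.s_inj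
  rw [← t_gmap hn ht a, ← t_gmap hn ht b, hab]

lemma phi_eq_image {n : ℕ} {P : Iposet} (hn : P.n = n) (ht : Function.Bijective P.t) :
    phi n P = Finset.univ.image (gmap hn ht) := by
  ext x
  rw [mem_phi]
  simp only [Finset.mem_image, Finset.mem_univ, true_and]
  constructor
  · rintro ⟨i', j, h1, h2⟩
    refine ⟨j, ?_⟩
    have e : Fin.cast (m_eq hn ht).symm (gmap hn ht j) = i' := by
      apply P.t_inj; rw [t_gmap, h1]
    have hv : (gmap hn ht j : ℕ) = (i' : ℕ) := by rw [← e]; simp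
    ext; rw [hv, h2]
  · rintro ⟨j, rfl⟩
    exact ⟨Fin.cast (m_eq hn ht).symm (gmap hn ht j), j, t_gmap hn ht j, by simp⟩

lemma gmap_strictMono {n : ℕ} {P : Iposet} (hn : P.n = n) (ht : Function.Bijective P.t)
    (hic : InterfaceConsistent P) : StrictMono (gmap hn ht) := by
  intro a b hab
  have h1 := t_gmap hn ht a
  have h2 := t_gmap hn ht b
  have key := hic a b _ _ h1.symm h2.symm
  have hv : (gmap hn ht a : ℕ) < (gmap hn ht b : ℕ) := by
    have := key.mp hab
    simpa using this
  exact hv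

lemma phi_card {n : ℕ} {P : Iposet} (hn : P.n = n) (ht : Function.Bijective P.t) :
    (phi n P).card = P.k := by
  rw [phi_eq_image hn ht,
    Finset.card_image_of_injective _ (gmap_inj hn ht), Finset.card_univ, Fintype.card_fin]

lemma canon_phi_iso {n : ℕ} {P : Iposet} (hn : P.n = n) (hd : Discrete P)
    (ht : Function.Bijective P.t) (hic : InterfaceConsistent P) :
    Iso (canon n (phi n P)) P := by
  refine ⟨phi_card hn ht, (m_eq hn ht).symm,
    (finCongr (m_eq hn ht).symm).trans (Equiv.ofBijective P.t ht), ?_, ?_, ?_⟩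
  · intro x y
    exact iff_of_false (fun h => h) (hd _ _)
  · -- sources
    intro i
    have huniq : (fun i : Fin (phi n P).card => gmap hn ht (Fin.cast (phi_card hn ht) i))
        = ⇑((phi n P).orderEmbOfFin rfl) := by
      apply Finset.orderEmbOfFin_unique
      · intro x
        have hmem : gmap hn ht (Fin.cast (phi_card hn ht) x) ∈
            Finset.univ.image (gmap hn ht) :=
          Finset.mem_image_of_mem _ (Finset.mem_univ _)
        rwa [← phi_eq_image hn ht] at hmem
      · intro a b hab
        apply gmap_strictMono hn ht hic
        rw [Fin.lt_def] at hab ⊢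
        simpa using hab
    show _ = P.s (Fin.cast (phi_card hn ht) i)
    have hcs : (canon n (phi n P)).s i = gmap hn ht (Fin.cast (phi_card hn ht) i) := by
      show ((phi n P).orderEmbOfFin rfl) i = _
      rw [← huniq]
    calc ((finCongr (m_eq hn ht).symm).trans (Equiv.ofBijective P.t ht))
            ((canon n (phi n P)).s i)
        = P.t (Fin.cast (m_eq hn ht).symm (gmap hn ht (Fin.cast (phi_card hn ht) i))) := by
          rw [hcs]; rfl
      _ = P.s (Fin.cast (phi_card hn ht) i) := t_gmap hn ht _
  · -- targets
    intro i
    rfl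

lemma phi_canon {n : ℕ} (S : Finset (Fin n)) : phi n (canon n S) = S := by
  ext x
  rw [mem_phi]
  constructor
  · rintro ⟨i', j, h1, h2⟩
    have : (S.orderEmbOfFin rfl j : Fin n) = x := by
      have : (S.orderEmbOfFin rfl j : Fin n) = i' := h1.symm
      ext; rw [this]; exact h2
    rw [← this]
    exact S.orderEmbOfFin_mem rfl j
  · intro hx
    have : x ∈ Set.range ⇑(S.orderEmbOfFin rfl) := by
      rw [Finset.range_orderEmbOfFin]; exact hx
    obtain ⟨j, hj⟩ := this
    exact ⟨x, j, hj.symm, rfl⟩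

end CountStarters
open Iposet in
/-- The number of isomorphism classes of interface-consistent starters on
`n` points equals `2^n`. -/
theorem count_ic_starters (n : ℕ) :
    Nat.card (Quot (fun (P Q : {P : Iposet // P.n = n ∧ Discrete P ∧
        Function.Bijective P.t ∧ InterfaceConsistent P}) => Iso P.1 Q.1)) = 2 ^ n := by
  classical
  have e : Quot (fun (P Q : {P : Iposet // P.n = n ∧ Discrete P ∧
      Function.Bijective P.t ∧ InterfaceConsistent P}) => Iso P.1 Q.1) ≃ Finset (Fin n) :=
    { toFun := Quot.lift (fun P => CountStarters.phi n P.1)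
        (fun _ _ h => CountStarters.phi_iso h)
      invFun := fun S => Quot.mk _ ⟨CountStarters.canon n S, CountStarters.canon_mem n S⟩
      left_inv := by
        apply Quot.ind
        intro P
        exact Quot.sound (CountStarters.canon_phi_iso P.2.1 P.2.2.1 P.2.2.2.1 P.2.2.2.2)
      right_inv := fun S => CountStarters.phi_canon S }
  rw [Nat.card_congr e, Nat.card_eq_fintype_card, Fintype.card_finset, Fintype.card_fin]
end

section
/- For every natural number n, the number of isomorphism classes of starters on n points (discrete iposets with bijective target map, no interface-consistency requirement) equals ∑_{k=0}^n n!/k!. -/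
section StarterCount

open Iposet

/-- Invariant type for starters on `n` points. -/
abbrev STy (n : ℕ) := Σ k : Fin (n+1), (Fin (k : ℕ) ↪ Fin n)

lemma sty_mk_eq {n a b : ℕ} (ha : a < n+1) (hb : b < n+1) (h : a = b)
    (u : Fin a ↪ Fin n) (v : Fin b ↪ Fin n)
    (huv : ∀ i, u i = v (Fin.cast h i)) :
    (⟨⟨a, ha⟩, u⟩ : STy n) = ⟨⟨b, hb⟩, v⟩ := by
  subst h
  have : u = v := by
    ext i
    exact congrArg Fin.val (by simpa using huv i)
  subst this
  rfl

lemma sty_mk_inj {n a b : ℕ} {ha : a < n+1} {hb : b < n+1}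
    {u : Fin a ↪ Fin n} {v : Fin b ↪ Fin n}
    (h : (⟨⟨a, ha⟩, u⟩ : STy n) = ⟨⟨b, hb⟩, v⟩) :
    ∃ hab : a = b, ∀ i, u i = v (Fin.cast hab i) := by
  obtain ⟨h1, h2⟩ := Sigma.mk.inj_iff.mp h
  have hab : a = b := by
    have := congrArg Fin.val h1
    simpa using this
  subst hab
  refine ⟨rfl, fun i => ?_⟩
  have := eq_of_heq h2
  subst this
  simp

lemma starter_m_eq {n : ℕ} (P : Iposet) (hn : P.n = n)
    (ht : Function.Bijective P.t) : P.m = n := by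
  have := Fintype.card_of_bijective ht
  simpa [hn] using this

lemma starter_k_le {n : ℕ} (P : Iposet) (hn : P.n = n) : P.k ≤ n := by
  have := Fintype.card_le_of_injective P.s P.s_inj
  simpa [hn] using this

/-- The invariant of a starter: its source count together with the
injection `t⁻¹ ∘ s`. -/
noncomputable def starterInv (n : ℕ) (P : Iposet) (hn : P.n = n)
    (ht : Function.Bijective P.t) : STy n :=
  ⟨⟨P.k, Nat.lt_succ_of_le (starter_k_le P hn)⟩,
   ⟨fun i => Fin.cast (starter_m_eq P hn ht)
      ((Equiv.ofBijective P.t ht).symm (P.s i)),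
    by
      intro i j hij
      apply P.s_inj
      apply (Equiv.ofBijective P.t ht).symm.injective
      exact Fin.cast_injective _ hij⟩⟩

lemma starterInv_sound {n : ℕ} (P Q : Iposet) (hnP : P.n = n) (hnQ : Q.n = n)
    (htP : Function.Bijective P.t) (htQ : Function.Bijective Q.t)
    (h : Iso P Q) :
    starterInv n P hnP htP = starterInv n Q hnQ htQ := by
  obtain ⟨hk, hm, f, _, hs, ht⟩ := h
  apply sty_mk_eq _ _ hk
  intro i
  set eP := Equiv.ofBijective P.t htP with heP
  set eQ := Equiv.ofBijective Q.t htQ with heQ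
  apply Fin.ext
  simp only [Function.Embedding.coeFn_mk, Fin.coe_cast]
  -- reduce to equality of the `symm` values
  set j := eP.symm (P.s i) with hj
  have h1 : P.t j = P.s i := eP.apply_symm_apply (P.s i)
  have h2 : Q.s (Fin.cast hk i) = Q.t (Fin.cast hm j) := by
    rw [← hs i, ← h1, ht j]
  have h3 : eQ.symm (Q.s (Fin.cast hk i)) = Fin.cast hm j := by
    apply eQ.injective
    rw [eQ.apply_symm_apply, h2]
    simp [heQ, Equiv.ofBijective_apply]
  show (eP.symm (P.s i) : ℕ) = (eQ.symm (Q.s (Fin.cast hk i)) : ℕ)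
  rw [h3]
  simp
  rfl

lemma starterInv_complete {n : ℕ} (P Q : Iposet) (hnP : P.n = n) (hnQ : Q.n = n)
    (hdP : Discrete P) (hdQ : Discrete Q)
    (htP : Function.Bijective P.t) (htQ : Function.Bijective Q.t)
    (h : starterInv n P hnP htP = starterInv n Q hnQ htQ) :
    Iso P Q := by
  obtain ⟨hk, huv⟩ := sty_mk_inj h
  have hm : P.m = Q.m := by
    rw [starter_m_eq P hnP htP, starter_m_eq Q hnQ htQ]
  set eP := Equiv.ofBijective P.t htP with heP
  set eQ := Equiv.ofBijective Q.t htQ with heQ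
  refine ⟨hk, hm, eP.symm.trans ((finCongr hm).trans eQ), ?_, ?_, ?_⟩
  · intro x y
    constructor
    · intro hxy; exact absurd hxy (hdP x y)
    · intro hxy; exact absurd hxy (hdQ _ _)
  · intro i
    have := huv i
    simp only [starterInv, Function.Embedding.coeFn_mk] at this
    have hval : ((eP.symm (P.s i)) : ℕ) = ((eQ.symm (Q.s (Fin.cast hk i))) : ℕ) := by
      have := congrArg Fin.val this
      exact this
    simp only [Equiv.trans_apply, finCongr_apply]
    have : (Fin.cast hm (eP.symm (P.s i))) = eQ.symm (Q.s (Fin.cast hk i)) := by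
      apply Fin.ext; simpa using hval
    rw [this, eQ.apply_symm_apply]
  · intro i
    have h1 : eP.symm (P.t i) = i := by
      apply eP.injective
      rw [eP.apply_symm_apply]
      simp [heP, Equiv.ofBijective_apply]
    simp only [Equiv.trans_apply, finCongr_apply, h1]
    simp [heQ, Equiv.ofBijective_apply]

/-- Every invariant is realized by a starter. -/
def starterOf (n : ℕ) (k : Fin (n+1)) (u : Fin (k : ℕ) ↪ Fin n) : Iposet where
  n := n
  lt := fun _ _ => False
  lt_irrefl := fun _ h => h
  lt_trans := fun _ _ _ h _ => h.elim
  k := k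
  m := n
  s := u
  t := id
  s_inj := u.injective
  t_inj := Function.injective_id
  s_min := fun _ _ h => h
  t_max := fun _ _ h => h

lemma starterInv_starterOf (n : ℕ) (k : Fin (n+1)) (u : Fin (k : ℕ) ↪ Fin n) :
    starterInv n (starterOf n k u) rfl Function.bijective_id = ⟨k, u⟩ := by
  obtain ⟨kv, hkv⟩ := k
  apply sty_mk_eq _ _ rfl
  intro i
  apply Fin.ext
  simp only [starterOf, Function.Embedding.coeFn_mk, Fin.coe_cast]
  have : (Equiv.ofBijective (id : Fin n → Fin n) Function.bijective_id).symm (u i) = u i := by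
    apply (Equiv.ofBijective (id : Fin n → Fin n) Function.bijective_id).injective
    rw [Equiv.apply_symm_apply]
    simp [Equiv.ofBijective_apply]
  show ((Equiv.ofBijective (id : Fin n → Fin n) Function.bijective_id).symm (u i) : ℕ) = _
  rw [this]
  simp
  rfl

end StarterCount

open Iposet in
/-- The number of isomorphism classes of starters on `n` points equals
`∑_{k=0}^n n!/k!`. -/
theorem count_starters (n : ℕ) :
    Nat.card (Quot (fun (P Q : {P : Iposet // P.n = n ∧ Discrete P ∧
        Function.Bijective P.t}) => Iso P.1 Q.1)) =
      ∑ k ∈ Finset.range (n + 1), n.factorial / k.factorial := by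
  classical
  set S := {P : Iposet // P.n = n ∧ Discrete P ∧ Function.Bijective P.t} with hS
  set rel := fun (P Q : S) => Iso P.1 Q.1 with hrel
  have hΦ : ∀ (a b : S), rel a b →
      starterInv n a.1 a.2.1 a.2.2.2 = starterInv n b.1 b.2.1 b.2.2.2 := by
    intro a b hab
    exact starterInv_sound a.1 b.1 a.2.1 b.2.1 a.2.2.2 b.2.2.2 hab
  have hbij : Function.Bijective
      (Quot.lift (fun X : S => starterInv n X.1 X.2.1 X.2.2.2) hΦ) := by
    constructor
    · intro x y
      induction x using Quot.ind with | _ a =>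
      induction y using Quot.ind with | _ b =>
      intro h
      exact Quot.sound (starterInv_complete a.1 b.1 a.2.1 b.2.1
        a.2.2.1 b.2.2.1 a.2.2.2 b.2.2.2 h)
    · rintro ⟨k, u⟩
      refine ⟨Quot.mk _ ⟨starterOf n k u, rfl, fun _ _ h => h,
        Function.bijective_id⟩, ?_⟩
      exact starterInv_starterOf n k u
  rw [Nat.card_eq_of_bijective _ hbij, Nat.card_eq_fintype_card,
    Fintype.card_sigma]
  have hcard : ∀ k : Fin (n+1),
      Fintype.card (Fin (k : ℕ) ↪ Fin n) = n.descFactorial k := by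
    intro k
    simp [Fintype.card_embedding_eq]
  simp only [hcard]
  rw [Fin.sum_univ_eq_sum_range (fun k => n.descFactorial k) (n+1),
    ← Finset.sum_range_reflect (fun j => n.factorial / j.factorial) (n+1)]
  apply Finset.sum_congr rfl
  intro k hk
  have hk' : k ≤ n := by
    have := Finset.mem_range.mp hk
    omega
  rw [Nat.descFactorial_eq_div hk']
  congr 2
end

section
/- For every natural number n, the number of isomorphism classes of interface-consistent discrete iposets on n points equals ∑_{s=0}^n ∑_{t=0}^n ∑_{u=max(0,s+t−n)}^{min(s,t)} C(s,u)·C(t,u). -/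
namespace Iposet

noncomputable section

def Rel (P : Iposet) (x y : ℕ) : Prop :=
  ∃ (i : Fin P.k) (j : Fin P.m), (i : ℕ) = x ∧ (j : ℕ) = y ∧ P.s i = P.t j

open Classical in
def SA (P : Iposet) : Finset ℕ :=
  (Finset.univ.filter fun i : Fin P.k => ∃ j, P.s i = P.t j).image Fin.val

open Classical in
def SB (P : Iposet) : Finset ℕ :=
  (Finset.univ.filter fun j : Fin P.m => ∃ i, P.s i = P.t j).image Fin.val

lemma mem_SA {P : Iposet} {x : ℕ} : x ∈ SA P ↔ ∃ y, Rel P x y := by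
  simp only [SA, Finset.mem_image, Finset.mem_filter, Finset.mem_univ, true_and, Rel]
  constructor
  · rintro ⟨i, ⟨j, hij⟩, rfl⟩; exact ⟨j, i, j, rfl, rfl, hij⟩
  · rintro ⟨y, i, j, rfl, rfl, hij⟩; exact ⟨i, ⟨j, hij⟩, rfl⟩

lemma mem_SB {P : Iposet} {y : ℕ} : y ∈ SB P ↔ ∃ x, Rel P x y := by
  simp only [SB, Finset.mem_image, Finset.mem_filter, Finset.mem_univ, true_and, Rel]
  constructor
  · rintro ⟨j, ⟨i, hij⟩, rfl⟩; exact ⟨i, i, j, rfl, rfl, hij⟩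
  · rintro ⟨x, i, j, rfl, rfl, hij⟩; exact ⟨j, ⟨i, hij⟩, rfl⟩

lemma rel_right_unique {P : Iposet} {x y y' : ℕ} (h : Rel P x y) (h' : Rel P x y') : y = y' := by
  obtain ⟨i, j, hi, hj, hs⟩ := h
  obtain ⟨i', j', hi', hj', hs'⟩ := h'
  have : i = i' := Fin.ext (hi.trans hi'.symm)
  subst this
  have : j = j' := P.t_inj (hs.symm.trans hs')
  subst this; exact hj.symm.trans hj'

lemma rel_lt_iff {P : Iposet} (hc : InterfaceConsistent P) {x y x' y' : ℕ}
    (h : Rel P x y) (h' : Rel P x' y') : (x < x' ↔ y < y') := by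
  obtain ⟨i, j, hi, hj, hs⟩ := h
  obtain ⟨i', j', hi', hj', hs'⟩ := h'
  subst hi hj hi' hj'
  exact hc i i' j j' hs hs'

open Classical in
def mtc (P : Iposet) (x : ℕ) : ℕ :=
  if h : ∃ y, Rel P x y then h.choose else 0

open Classical in
lemma rel_mtc {P : Iposet} {x : ℕ} (h : ∃ y, Rel P x y) : Rel P x (mtc P x) := by
  rw [mtc, dif_pos h]; exact h.choose_spec

lemma mtc_eq {P : Iposet} {x y : ℕ} (h : Rel P x y) : mtc P x = y :=
  rel_right_unique (rel_mtc ⟨y, h⟩) h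

-- cards
open Classical in
lemma card_SA {P : Iposet} :
    (SA P).card = ((Finset.univ.image P.s) ∩ (Finset.univ.image P.t)).card := by
  rw [SA, Finset.card_image_of_injective _ Fin.val_injective]
  apply Finset.card_bij (fun i _ => P.s i)
  · intro i hi
    rw [Finset.mem_filter] at hi
    obtain ⟨-, j, hj⟩ := hi
    exact Finset.mem_inter.2 ⟨Finset.mem_image.2 ⟨i, Finset.mem_univ _, rfl⟩,
      Finset.mem_image.2 ⟨j, Finset.mem_univ _, hj.symm⟩⟩
  · intro a _ b _ h; exact P.s_inj h
  · intro x hx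
    rw [Finset.mem_inter] at hx
    obtain ⟨hx1, hx2⟩ := hx
    obtain ⟨i, -, rfl⟩ := Finset.mem_image.1 hx1
    obtain ⟨j, -, hj⟩ := Finset.mem_image.1 hx2
    exact ⟨i, Finset.mem_filter.2 ⟨Finset.mem_univ _, j, hj.symm⟩, rfl⟩

open Classical in
lemma card_SB {P : Iposet} :
    (SB P).card = ((Finset.univ.image P.s) ∩ (Finset.univ.image P.t)).card := by
  rw [SB, Finset.card_image_of_injective _ Fin.val_injective]
  apply Finset.card_bij (fun j _ => P.t j)
  · intro j hj
    rw [Finset.mem_filter] at hj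
    obtain ⟨-, i, hi⟩ := hj
    exact Finset.mem_inter.2 ⟨Finset.mem_image.2 ⟨i, Finset.mem_univ _, hi⟩,
      Finset.mem_image.2 ⟨j, Finset.mem_univ _, rfl⟩⟩
  · intro a _ b _ h; exact P.t_inj h
  · intro x hx
    rw [Finset.mem_inter] at hx
    obtain ⟨hx1, hx2⟩ := hx
    obtain ⟨i, -, hi⟩ := Finset.mem_image.1 hx1
    obtain ⟨j, -, rfl⟩ := Finset.mem_image.1 hx2
    exact ⟨j, Finset.mem_filter.2 ⟨Finset.mem_univ _, i, hi⟩, rfl⟩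

lemma card_SA_SB (P : Iposet) : (SA P).card = (SB P).card := card_SA.trans card_SB.symm

-- uniqueness of monotone bijections
lemma strictMonoOn_agree {A B : Finset ℕ} (hAB : A.card = B.card) {f g : ℕ → ℕ}
    (hf : ∀ x ∈ A, f x ∈ B) (hg : ∀ x ∈ A, g x ∈ B)
    (hfm : ∀ x ∈ A, ∀ y ∈ A, x < y → f x < f y)
    (hgm : ∀ x ∈ A, ∀ y ∈ A, x < y → g x < g y) :
    ∀ x ∈ A, f x = g x := by
  have key : ∀ (h : ℕ → ℕ), (∀ x ∈ A, h x ∈ B) → (∀ x ∈ A, ∀ y ∈ A, x < y → h x < h y) →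
      (fun i : Fin A.card => h (A.orderEmbOfFin rfl i)) = B.orderEmbOfFin hAB.symm := by
    intro h hmem hmono
    apply Finset.orderEmbOfFin_unique
    · intro i; exact hmem _ (Finset.orderEmbOfFin_mem _ _ _)
    · intro i i' hlt
      exact hmono _ (Finset.orderEmbOfFin_mem _ _ _) _ (Finset.orderEmbOfFin_mem _ _ _)
        ((A.orderEmbOfFin rfl).strictMono hlt)
  intro x hx
  have : x ∈ Set.range (A.orderEmbOfFin rfl) := by
    rw [Finset.range_orderEmbOfFin]; exact hx
  obtain ⟨i, rfl⟩ := this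
  calc f (A.orderEmbOfFin rfl i) = B.orderEmbOfFin hAB.symm i := congrFun (key f hf hfm) i
    _ = g (A.orderEmbOfFin rfl i) := (congrFun (key g hg hgm) i).symm

lemma mtc_agree {P Q : Iposet} (hcP : InterfaceConsistent P) (hcQ : InterfaceConsistent Q)
    (hA : SA P = SA Q) (hB : SB P = SB Q) : ∀ x ∈ SA P, mtc P x = mtc Q x := by
  apply strictMonoOn_agree (card_SA_SB P)
  · intro x hx; exact mem_SB.2 ⟨x, rel_mtc (mem_SA.1 hx)⟩
  · intro x hx
    rw [hB]
    exact mem_SB.2 ⟨x, rel_mtc (mem_SA.1 (hA ▸ hx))⟩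
  · intro x hx y hy hlt
    exact (rel_lt_iff hcP (rel_mtc (mem_SA.1 hx)) (rel_mtc (mem_SA.1 hy))).1 hlt
  · intro x hx y hy hlt
    rw [hA] at hx hy
    exact (rel_lt_iff hcQ (rel_mtc (mem_SA.1 hx)) (rel_mtc (mem_SA.1 hy))).1 hlt

lemma rel_congr {P Q : Iposet} (hcP : InterfaceConsistent P) (hcQ : InterfaceConsistent Q)
    (hA : SA P = SA Q) (hB : SB P = SB Q) {x y : ℕ} (h : Rel P x y) : Rel Q x y := by
  have hx : x ∈ SA P := mem_SA.2 ⟨y, h⟩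
  have h1 : mtc P x = y := mtc_eq h
  have h2 : mtc Q x = y := (mtc_agree hcP hcQ hA hB x hx).symm.trans h1
  have := rel_mtc (P := Q) (x := x) (mem_SA.1 (hA ▸ hx))
  rwa [h2] at this

def inva (P : Iposet) : ℕ × ℕ × Finset ℕ × Finset ℕ := (P.k, P.m, SA P, SB P)

lemma rel_iso {P Q : Iposet} (h : Iso P Q) {x y : ℕ} : Rel P x y ↔ Rel Q x y := by
  obtain ⟨hk, hm, f, -, hs, ht⟩ := h
  constructor
  · rintro ⟨i, j, rfl, rfl, hij⟩
    refine ⟨Fin.cast hk i, Fin.cast hm j, rfl, rfl, ?_⟩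
    rw [← hs, ← ht, hij]
  · rintro ⟨i, j, rfl, rfl, hij⟩
    refine ⟨Fin.cast hk.symm i, Fin.cast hm.symm j, rfl, rfl, ?_⟩
    apply f.injective
    rw [hs, ht]
    simpa using hij

lemma inva_iso {P Q : Iposet} (h : Iso P Q) : inva P = inva Q := by
  obtain ⟨hk, hm, -⟩ := id h
  have hA : SA P = SA Q := by
    ext x; rw [mem_SA, mem_SA]
    exact exists_congr fun y => rel_iso h
  have hB : SB P = SB Q := by
    ext y; rw [mem_SB, mem_SB]
    exact exists_congr fun x => rel_iso h
  simp [inva, hk, hm, hA, hB]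

lemma st_congr {P Q : Iposet} (hcP : InterfaceConsistent P) (hcQ : InterfaceConsistent Q)
    (hk : P.k = Q.k) (hm : P.m = Q.m) (hA : SA P = SA Q) (hB : SB P = SB Q)
    {i : Fin P.k} {j : Fin P.m} (h : P.s i = P.t j) :
    Q.s (Fin.cast hk i) = Q.t (Fin.cast hm j) := by
  have hrel : Rel Q i j := rel_congr hcP hcQ hA hB ⟨i, j, rfl, rfl, h⟩
  obtain ⟨i', j', hi', hj', hs'⟩ := hrel
  have h1 : i' = Fin.cast hk i := Fin.ext hi'
  have h2 : j' = Fin.cast hm j := Fin.ext hj'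
  rwa [h1, h2] at hs'

open Classical in
def transfer {P Q : Iposet} (hk : P.k = Q.k) (hm : P.m = Q.m)
    (cE : {x : Fin P.n // x ∉ (Finset.univ.image P.s ∪ Finset.univ.image P.t)} → Fin Q.n) :
    Fin P.n → Fin Q.n := fun x =>
  if h1 : ∃ i, P.s i = x then Q.s (Fin.cast hk h1.choose)
  else if h2 : ∃ j, P.t j = x then Q.t (Fin.cast hm h2.choose)
  else cE ⟨x, by
    intro hmem
    rcases Finset.mem_union.1 hmem with hh | hh
    · obtain ⟨i, -, hi⟩ := Finset.mem_image.1 hh; exact h1 ⟨i, hi⟩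
    · obtain ⟨j, -, hj⟩ := Finset.mem_image.1 hh; exact h2 ⟨j, hj⟩⟩

open Classical in
lemma transfer_s {P Q : Iposet} (hk : P.k = Q.k) (hm : P.m = Q.m)
    (cE : {x : Fin P.n // x ∉ (Finset.univ.image P.s ∪ Finset.univ.image P.t)} → Fin Q.n)
    (i : Fin P.k) : transfer hk hm cE (P.s i) = Q.s (Fin.cast hk i) := by
  have h1 : ∃ i', P.s i' = P.s i := ⟨i, rfl⟩
  have hch : h1.choose = i := P.s_inj h1.choose_spec
  simp only [transfer, dif_pos h1, hch]

open Classical in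
lemma transfer_t {P Q : Iposet} (hcP : InterfaceConsistent P) (hcQ : InterfaceConsistent Q)
    (hk : P.k = Q.k) (hm : P.m = Q.m) (hA : SA P = SA Q) (hB : SB P = SB Q)
    (cE : {x : Fin P.n // x ∉ (Finset.univ.image P.s ∪ Finset.univ.image P.t)} → Fin Q.n)
    (j : Fin P.m) : transfer hk hm cE (P.t j) = Q.t (Fin.cast hm j) := by
  by_cases h1 : ∃ i, P.s i = P.t j
  · have hs' := h1.choose_spec
    have hkey := st_congr hcP hcQ hk hm hA hB hs'
    simp only [transfer, dif_pos h1]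
    exact hkey
  · have h2 : ∃ j', P.t j' = P.t j := ⟨j, rfl⟩
    have hch : h2.choose = j := P.t_inj h2.choose_spec
    simp only [transfer, dif_neg h1, dif_pos h2, hch]

open Classical in
lemma iso_of_inva_eq {P Q : Iposet} (hn : P.n = Q.n)
    (hdP : Discrete P) (hdQ : Discrete Q)
    (hcP : InterfaceConsistent P) (hcQ : InterfaceConsistent Q)
    (h : inva P = inva Q) : Iso P Q := by
  have hk : P.k = Q.k := congrArg Prod.fst h
  have hm : P.m = Q.m := congrArg (fun q => q.2.1) h
  have hA : SA P = SA Q := congrArg (fun q => q.2.2.1) h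
  have hB : SB P = SB Q := congrArg (fun q => q.2.2.2) h
  have hUV : (Finset.univ.image P.s ∪ Finset.univ.image P.t).card =
      (Finset.univ.image Q.s ∪ Finset.univ.image Q.t).card := by
    have h1 := Finset.card_inter_add_card_union (Finset.univ.image P.s) (Finset.univ.image P.t)
    have h2 := Finset.card_inter_add_card_union (Finset.univ.image Q.s) (Finset.univ.image Q.t)
    have h3 : ((Finset.univ.image P.s) ∩ (Finset.univ.image P.t)).card =
        ((Finset.univ.image Q.s) ∩ (Finset.univ.image Q.t)).card := by
      rw [← card_SA (P := P), ← card_SA (P := Q), hA]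
    have h4 : (Finset.univ.image P.s).card = P.k := by
      rw [Finset.card_image_of_injective _ P.s_inj, Finset.card_univ, Fintype.card_fin]
    have h5 : (Finset.univ.image P.t).card = P.m := by
      rw [Finset.card_image_of_injective _ P.t_inj, Finset.card_univ, Fintype.card_fin]
    have h6 : (Finset.univ.image Q.s).card = Q.k := by
      rw [Finset.card_image_of_injective _ Q.s_inj, Finset.card_univ, Fintype.card_fin]
    have h7 : (Finset.univ.image Q.t).card = Q.m := by
      rw [Finset.card_image_of_injective _ Q.t_inj, Finset.card_univ, Fintype.card_fin]
    omega
  have hcompl : Fintype.card {x : Fin P.n // x ∉ (Finset.univ.image P.s ∪ Finset.univ.image P.t)}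
      = Fintype.card {x : Fin Q.n // x ∉ (Finset.univ.image Q.s ∪ Finset.univ.image Q.t)} := by
    rw [Fintype.card_subtype_compl, Fintype.card_subtype_compl, Fintype.card_coe,
      Fintype.card_coe, Fintype.card_fin, Fintype.card_fin]
    omega
  let cE := Fintype.equivOfCardEq hcompl
  let F : Fin P.n → Fin Q.n := transfer hk hm (fun z => (cE z).1)
  have hsurj : Function.Surjective F := by
    intro y
    by_cases h1 : ∃ i', Q.s i' = y
    · obtain ⟨i', rfl⟩ := h1
      refine ⟨P.s (Fin.cast hk.symm i'), ?_⟩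
      show transfer hk hm (fun z => (cE z).1) (P.s (Fin.cast hk.symm i')) = Q.s i'
      rw [transfer_s]
      exact congrArg Q.s (Fin.ext rfl)
    · by_cases h2 : ∃ j', Q.t j' = y
      · obtain ⟨j', rfl⟩ := h2
        refine ⟨P.t (Fin.cast hm.symm j'), ?_⟩
        show transfer hk hm (fun z => (cE z).1) (P.t (Fin.cast hm.symm j')) = Q.t j'
        rw [transfer_t hcP hcQ hk hm hA hB]
        exact congrArg Q.t (Fin.ext rfl)
      · have hy : y ∉ (Finset.univ.image Q.s ∪ Finset.univ.image Q.t) := by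
          intro hmem
          rcases Finset.mem_union.1 hmem with hh | hh
          · obtain ⟨i', -, hi'⟩ := Finset.mem_image.1 hh; exact h1 ⟨i', hi'⟩
          · obtain ⟨j', -, hj'⟩ := Finset.mem_image.1 hh; exact h2 ⟨j', hj'⟩
        set z := cE.symm ⟨y, hy⟩ with hz
        refine ⟨z.1, ?_⟩
        have hx1 : ¬ ∃ i, P.s i = z.1 := by
          rintro ⟨i, hi⟩
          exact z.2 (hi ▸ Finset.mem_union_left _
            (Finset.mem_image_of_mem _ (Finset.mem_univ i)))
        have hx2 : ¬ ∃ j, P.t j = z.1 := by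
          rintro ⟨j, hj⟩
          exact z.2 (hj ▸ Finset.mem_union_right _
            (Finset.mem_image_of_mem _ (Finset.mem_univ j)))
        show transfer hk hm (fun z => (cE z).1) z.1 = y
        rw [transfer, dif_neg hx1, dif_neg hx2]
        rw [Subtype.coe_eta, hz, Equiv.apply_symm_apply]
  have hbij : Function.Bijective F := by
    rw [Fintype.bijective_iff_surjective_and_card]
    exact ⟨hsurj, by rw [Fintype.card_fin, Fintype.card_fin, hn]⟩
  refine ⟨hk, hm, Equiv.ofBijective F hbij, ?_, ?_, ?_⟩
  · intro x y; exact iff_of_false (hdP x y) (hdQ _ _)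
  · intro i
    show transfer hk hm (fun z => (cE z).1) (P.s i) = Q.s (Fin.cast hk i)
    exact transfer_s hk hm _ i
  · intro j
    show transfer hk hm (fun z => (cE z).1) (P.t j) = Q.t (Fin.cast hm j)
    exact transfer_t hcP hcQ hk hm hA hB _ j

def rkIn (A : Finset ℕ) (x : ℕ) (hx : x ∈ A) : ℕ :=
  ((A.orderIsoOfFin rfl).symm ⟨x, hx⟩ : Fin A.card).val

lemma rkIn_lt {A : Finset ℕ} {x : ℕ} (hx : x ∈ A) : rkIn A x hx < A.card :=
  Fin.is_lt _

lemma rkIn_lt_iff {A : Finset ℕ} {x y : ℕ} (hx : x ∈ A) (hy : y ∈ A) :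
    rkIn A x hx < rkIn A y hy ↔ x < y := by
  unfold rkIn
  rw [← Fin.lt_def, OrderIso.lt_iff_lt, Subtype.mk_lt_mk]

lemma rkIn_inj {A : Finset ℕ} {x y : ℕ} (hx : x ∈ A) (hy : y ∈ A)
    (h : rkIn A x hx = rkIn A y hy) : x = y := by
  rcases lt_trichotomy x y with hl | he | hl
  · exact absurd ((rkIn_lt_iff hx hy).2 hl) (by omega)
  · exact he
  · exact absurd ((rkIn_lt_iff hy hx).2 hl) (by omega)

def unrk (B : Finset ℕ) (r : ℕ) (hr : r < B.card) : ℕ :=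
  (B.orderIsoOfFin rfl ⟨r, hr⟩ : ℕ)

lemma unrk_mem (B : Finset ℕ) (r : ℕ) (hr : r < B.card) : unrk B r hr ∈ B :=
  (B.orderIsoOfFin rfl ⟨r, hr⟩).2

lemma rkIn_unrk (B : Finset ℕ) (r : ℕ) (hr : r < B.card) :
    rkIn B (unrk B r hr) (unrk_mem B r hr) = r := by
  unfold rkIn unrk
  have h1 : (⟨(B.orderIsoOfFin rfl ⟨r, hr⟩ : ℕ), unrk_mem B r hr⟩ : {x // x ∈ B}) =
      B.orderIsoOfFin rfl ⟨r, hr⟩ := Subtype.ext rfl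
  rw [h1, OrderIso.symm_apply_apply]

lemma card_le_of_subset_range {A : Finset ℕ} {a : ℕ} (hA : A ⊆ Finset.range a) :
    A.card ≤ a := by
  have := Finset.card_le_card hA
  simpa [Finset.card_range] using this

open Classical in
def canon (n a b : ℕ) (A B : Finset ℕ) (hA : A ⊆ Finset.range a) (hB : B ⊆ Finset.range b)
    (hcard : B.card = A.card) (han : a ≤ n) (hbn : a + b ≤ n + A.card) : Iposet where
  n := n
  lt _ _ := False
  lt_irrefl _ := id
  lt_trans _ _ _ h := h.elim
  k := a
  m := b
  s i :=
    if h : (i : ℕ) ∈ A then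
      ⟨rkIn A i h, by
        have h1 := rkIn_lt h
        have h2 := card_le_of_subset_range hA
        omega⟩
    else
      ⟨A.card + rkIn (Finset.range a \ A) i
          (Finset.mem_sdiff.2 ⟨Finset.mem_range.2 i.isLt, h⟩), by
        have h1 := rkIn_lt (Finset.mem_sdiff.2 ⟨Finset.mem_range.2 i.isLt, h⟩)
        have h2 : (Finset.range a \ A).card = a - A.card := by
          rw [Finset.card_sdiff_of_subset hA, Finset.card_range]
        have h3 := card_le_of_subset_range hA
        omega⟩
  t j :=
    if h : (j : ℕ) ∈ B then
      ⟨rkIn B j h, by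
        have h1 := rkIn_lt h
        have h2 := card_le_of_subset_range hA
        omega⟩
    else
      ⟨a + rkIn (Finset.range b \ B) j
          (Finset.mem_sdiff.2 ⟨Finset.mem_range.2 j.isLt, h⟩), by
        have h1 := rkIn_lt (Finset.mem_sdiff.2 ⟨Finset.mem_range.2 j.isLt, h⟩)
        have h2 : (Finset.range b \ B).card = b - B.card := by
          rw [Finset.card_sdiff_of_subset hB, Finset.card_range]
        have h3 := card_le_of_subset_range hB
        omega⟩
  s_inj := by
    intro i i' h
    dsimp only at h
    have h2 := card_le_of_subset_range hA
    by_cases hi : (i : ℕ) ∈ A <;> by_cases hi' : (i' : ℕ) ∈ A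
    · rw [dif_pos hi, dif_pos hi'] at h
      simp only [Fin.mk.injEq] at h
      exact Fin.ext (rkIn_inj hi hi' h)
    · rw [dif_pos hi, dif_neg hi'] at h
      simp only [Fin.mk.injEq] at h
      have h1 := rkIn_lt hi
      omega
    · rw [dif_neg hi, dif_pos hi'] at h
      simp only [Fin.mk.injEq] at h
      have h1 := rkIn_lt hi'
      omega
    · rw [dif_neg hi, dif_neg hi'] at h
      simp only [Fin.mk.injEq] at h
      exact Fin.ext (rkIn_inj (Finset.mem_sdiff.2 ⟨Finset.mem_range.2 i.isLt, hi⟩)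
        (Finset.mem_sdiff.2 ⟨Finset.mem_range.2 i'.isLt, hi'⟩) (by omega))
  t_inj := by
    intro j j' h
    dsimp only at h
    have h2 := card_le_of_subset_range hB
    have h4 := card_le_of_subset_range hA
    by_cases hj : (j : ℕ) ∈ B <;> by_cases hj' : (j' : ℕ) ∈ B
    · rw [dif_pos hj, dif_pos hj'] at h
      simp only [Fin.mk.injEq] at h
      exact Fin.ext (rkIn_inj hj hj' h)
    · rw [dif_pos hj, dif_neg hj'] at h
      simp only [Fin.mk.injEq] at h
      have h1 := rkIn_lt hj
      omega
    · rw [dif_neg hj, dif_pos hj'] at h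
      simp only [Fin.mk.injEq] at h
      have h1 := rkIn_lt hj'
      omega
    · rw [dif_neg hj, dif_neg hj'] at h
      simp only [Fin.mk.injEq] at h
      exact Fin.ext (rkIn_inj (Finset.mem_sdiff.2 ⟨Finset.mem_range.2 j.isLt, hj⟩)
        (Finset.mem_sdiff.2 ⟨Finset.mem_range.2 j'.isLt, hj'⟩) (by omega))
  s_min _ _ h := h
  t_max _ _ h := h

open Classical in
lemma canon_st_iff {n a b : ℕ} {A B : Finset ℕ} {hA : A ⊆ Finset.range a}
    {hB : B ⊆ Finset.range b} {hcard : B.card = A.card} {han : a ≤ n}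
    {hbn : a + b ≤ n + A.card} (i : Fin a) (j : Fin b) :
    (canon n a b A B hA hB hcard han hbn).s i = (canon n a b A B hA hB hcard han hbn).t j ↔
      ∃ (hi : (i : ℕ) ∈ A) (hj : (j : ℕ) ∈ B), rkIn A i hi = rkIn B j hj := by
  have hAa := card_le_of_subset_range hA
  by_cases hi : (i : ℕ) ∈ A <;> by_cases hj : (j : ℕ) ∈ B
  · simp only [canon, dif_pos hi, dif_pos hj, Fin.mk.injEq]
    constructor
    · intro h; exact ⟨hi, hj, h⟩
    · rintro ⟨hi', hj', h⟩; exact h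
  · simp only [canon, dif_pos hi, dif_neg hj, Fin.mk.injEq]
    constructor
    · intro h; exfalso
      have h1 := rkIn_lt hi
      omega
    · rintro ⟨-, hj', -⟩; exact absurd hj' hj
  · simp only [canon, dif_neg hi, dif_pos hj, Fin.mk.injEq]
    constructor
    · intro h; exfalso
      have h1 := rkIn_lt hj
      have h3 : (Finset.range a \ A).card = a - A.card := by
        rw [Finset.card_sdiff_of_subset hA, Finset.card_range]
      omega
    · rintro ⟨hi', -, -⟩; exact absurd hi' hi
  · simp only [canon, dif_neg hi, dif_neg hj, Fin.mk.injEq]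
    constructor
    · intro h; exfalso
      have h1 := rkIn_lt (Finset.mem_sdiff.2 ⟨Finset.mem_range.2 i.isLt, hi⟩)
      have h3 : (Finset.range a \ A).card = a - A.card := by
        rw [Finset.card_sdiff_of_subset hA, Finset.card_range]
      omega
    · rintro ⟨hi', -, -⟩; exact absurd hi' hi

lemma canon_IC {n a b : ℕ} {A B : Finset ℕ} {hA : A ⊆ Finset.range a}
    {hB : B ⊆ Finset.range b} {hcard : B.card = A.card} {han : a ≤ n}
    {hbn : a + b ≤ n + A.card} :
    InterfaceConsistent (canon n a b A B hA hB hcard han hbn) := by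
  intro i j i' j' h1 h2
  obtain ⟨hi, hi', he1⟩ := (canon_st_iff i i').1 h1
  obtain ⟨hj, hj', he2⟩ := (canon_st_iff j j').1 h2
  rw [← rkIn_lt_iff hi hj, ← rkIn_lt_iff hi' hj', he1, he2]

lemma canon_discrete {n a b : ℕ} {A B : Finset ℕ} {hA : A ⊆ Finset.range a}
    {hB : B ⊆ Finset.range b} {hcard : B.card = A.card} {han : a ≤ n}
    {hbn : a + b ≤ n + A.card} :
    Discrete (canon n a b A B hA hB hcard han hbn) := fun _ _ h => h

lemma canon_inva {n a b : ℕ} {A B : Finset ℕ} {hA : A ⊆ Finset.range a}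
    {hB : B ⊆ Finset.range b} {hcard : B.card = A.card} {han : a ≤ n}
    {hbn : a + b ≤ n + A.card} :
    inva (canon n a b A B hA hB hcard han hbn) = (a, b, A, B) := by
  have hSA : SA (canon n a b A B hA hB hcard han hbn) = A := by
    ext x
    rw [mem_SA]
    constructor
    · rintro ⟨y, i, j, rfl, rfl, hij⟩
      obtain ⟨hi, -, -⟩ := (canon_st_iff i j).1 hij
      exact hi
    · intro hx
      have hxa : x < a := Finset.mem_range.1 (hA hx)
      have hr : rkIn A x hx < B.card := by rw [hcard]; exact rkIn_lt hx
      have hyB : unrk B (rkIn A x hx) hr ∈ B := unrk_mem _ _ _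
      have hyb : unrk B (rkIn A x hx) hr < b := Finset.mem_range.1 (hB hyB)
      refine ⟨unrk B (rkIn A x hx) hr, ⟨x, hxa⟩, ⟨unrk B (rkIn A x hx) hr, hyb⟩, rfl, rfl, ?_⟩
      apply (canon_st_iff _ _).2
      exact ⟨hx, hyB, (rkIn_unrk B _ hr).symm⟩
  have hSB : SB (canon n a b A B hA hB hcard han hbn) = B := by
    ext y
    rw [mem_SB]
    constructor
    · rintro ⟨x, i, j, rfl, rfl, hij⟩
      obtain ⟨-, hj, -⟩ := (canon_st_iff i j).1 hij
      exact hj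
    · intro hy
      have hyb : y < b := Finset.mem_range.1 (hB hy)
      have hr : rkIn B y hy < A.card := hcard ▸ rkIn_lt hy
      have hxA : unrk A (rkIn B y hy) hr ∈ A := unrk_mem _ _ _
      have hxa : unrk A (rkIn B y hy) hr < a := Finset.mem_range.1 (hA hxA)
      refine ⟨unrk A (rkIn B y hy) hr, ⟨unrk A (rkIn B y hy) hr, hxa⟩, ⟨y, hyb⟩, rfl, rfl, ?_⟩
      apply (canon_st_iff _ _).2
      exact ⟨hxA, hy, rkIn_unrk A _ hr⟩
  simp only [inva]
  rw [hSA, hSB]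
  rfl

lemma SA_subset (P : Iposet) : SA P ⊆ Finset.range P.k := by
  intro x hx
  rw [mem_SA] at hx
  obtain ⟨y, i, j, rfl, -, -⟩ := hx
  exact Finset.mem_range.2 i.isLt

lemma SB_subset (P : Iposet) : SB P ⊆ Finset.range P.m := by
  intro y hy
  rw [mem_SB] at hy
  obtain ⟨x, i, j, -, rfl, -⟩ := hy
  exact Finset.mem_range.2 j.isLt

lemma k_le_n (P : Iposet) : P.k ≤ P.n := by
  have := Fintype.card_le_of_injective P.s P.s_inj
  simpa using this

lemma m_le_n (P : Iposet) : P.m ≤ P.n := by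
  have := Fintype.card_le_of_injective P.t P.t_inj
  simpa using this

open Classical in
lemma inva_bound (P : Iposet) : P.k + P.m ≤ P.n + (SA P).card := by
  have h1 := Finset.card_inter_add_card_union (Finset.univ.image P.s) (Finset.univ.image P.t)
  have h2 : (Finset.univ.image P.s ∪ Finset.univ.image P.t).card ≤ P.n := by
    have := Finset.card_le_univ (Finset.univ.image P.s ∪ Finset.univ.image P.t)
    simpa using this
  have h3 := card_SA (P := P)
  have h4 : (Finset.univ.image P.s).card = P.k := by
    rw [Finset.card_image_of_injective _ P.s_inj, Finset.card_univ, Fintype.card_fin]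
  have h5 : (Finset.univ.image P.t).card = P.m := by
    rw [Finset.card_image_of_injective _ P.t_inj, Finset.card_univ, Fintype.card_fin]
  omega

def TT2 (a b u : ℕ) : Finset (ℕ × ℕ × Finset ℕ × Finset ℕ) :=
  ((Finset.range a).powersetCard u ×ˢ (Finset.range b).powersetCard u).image
    fun AB => (a, b, AB.1, AB.2)

def TT (n : ℕ) : Finset (ℕ × ℕ × Finset ℕ × Finset ℕ) :=
  (Finset.range (n+1)).biUnion fun a =>
    (Finset.range (n+1)).biUnion fun b =>
      (Finset.Icc (a + b - n) (min a b)).biUnion fun u => TT2 a b u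

lemma mem_TT2 {a b u : ℕ} {q : ℕ × ℕ × Finset ℕ × Finset ℕ} (h : q ∈ TT2 a b u) :
    q.1 = a ∧ q.2.1 = b ∧ q.2.2.1.card = u := by
  obtain ⟨⟨A, B⟩, hAB, rfl⟩ := Finset.mem_image.1 h
  rw [Finset.mem_product] at hAB
  exact ⟨rfl, rfl, (Finset.mem_powersetCard.1 hAB.1).2⟩

lemma mem_TT {n a b : ℕ} {A B : Finset ℕ} :
    (a, b, A, B) ∈ TT n ↔ a ≤ n ∧ b ≤ n ∧ A ⊆ Finset.range a ∧ B ⊆ Finset.range b ∧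
      B.card = A.card ∧ a + b ≤ n + A.card := by
  constructor
  · intro h
    simp only [TT, Finset.mem_biUnion, Finset.mem_range, Finset.mem_Icc, Nat.lt_succ_iff] at h
    obtain ⟨a', ha', b', hb', u, ⟨hu1, hu2⟩, hq⟩ := h
    obtain ⟨h1, h2, h3⟩ := mem_TT2 hq
    simp only at h1 h2 h3
    subst h1; subst h2
    obtain ⟨⟨A', B'⟩, hAB, hE⟩ := Finset.mem_image.1 hq
    rw [Finset.mem_product, Finset.mem_powersetCard, Finset.mem_powersetCard] at hAB
    have hA' : A' = A := congrArg (fun q => q.2.2.1) hE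
    have hB' : B' = B := congrArg (fun q => q.2.2.2) hE
    subst hA'; subst hB'
    refine ⟨ha', hb', hAB.1.1, hAB.2.1, hAB.2.2.trans hAB.1.2.symm, ?_⟩
    omega
  · rintro ⟨ha, hb, hA, hB, hcard, hbn⟩
    simp only [TT, Finset.mem_biUnion, Finset.mem_range, Finset.mem_Icc, Nat.lt_succ_iff]
    refine ⟨a, ha, b, hb, A.card, ⟨by omega, le_min (card_le_of_subset_range hA)
      (hcard ▸ card_le_of_subset_range hB)⟩, ?_⟩
    exact Finset.mem_image.2 ⟨(A, B), Finset.mem_product.2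
      ⟨Finset.mem_powersetCard.2 ⟨hA, rfl⟩, Finset.mem_powersetCard.2 ⟨hB, hcard⟩⟩, rfl⟩

lemma card_TT2 (a b u : ℕ) : (TT2 a b u).card = a.choose u * b.choose u := by
  rw [TT2, Finset.card_image_of_injective, Finset.card_product,
    Finset.card_powersetCard, Finset.card_powersetCard, Finset.card_range, Finset.card_range]
  intro x y hxy
  have h1 : x.1 = y.1 := congrArg (fun q => q.2.2.1) hxy
  have h2 : x.2 = y.2 := congrArg (fun q => q.2.2.2) hxy
  exact Prod.ext h1 h2

lemma card_TT (n : ℕ) : (TT n).card =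
    ∑ a ∈ Finset.range (n + 1), ∑ b ∈ Finset.range (n + 1),
      ∑ u ∈ Finset.Icc (a + b - n) (min a b), a.choose u * b.choose u := by
  rw [TT, Finset.card_biUnion]
  · refine Finset.sum_congr rfl fun a _ => ?_
    rw [Finset.card_biUnion]
    · refine Finset.sum_congr rfl fun b _ => ?_
      rw [Finset.card_biUnion]
      · exact Finset.sum_congr rfl fun u _ => card_TT2 a b u
      · intro u _ u' _ huu
        rw [Function.onFun, Finset.disjoint_left]
        intro q hq hq'
        exact huu ((mem_TT2 hq).2.2.symm.trans (mem_TT2 hq').2.2)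
    · intro b _ b' _ hbb
      rw [Function.onFun, Finset.disjoint_left]
      intro q hq hq'
      obtain ⟨u, -, hq⟩ := Finset.mem_biUnion.1 hq
      obtain ⟨u', -, hq'⟩ := Finset.mem_biUnion.1 hq'
      exact hbb ((mem_TT2 hq).2.1.symm.trans (mem_TT2 hq').2.1)
  · intro a _ a' _ haa
    rw [Function.onFun, Finset.disjoint_left]
    intro q hq hq'
    obtain ⟨b, -, hq⟩ := Finset.mem_biUnion.1 hq
    obtain ⟨u, -, hq⟩ := Finset.mem_biUnion.1 hq
    obtain ⟨b', -, hq'⟩ := Finset.mem_biUnion.1 hq'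
    obtain ⟨u', -, hq'⟩ := Finset.mem_biUnion.1 hq'
    exact haa ((mem_TT2 hq).1.symm.trans (mem_TT2 hq').1)

lemma inva_mem_TT {n : ℕ} (P : Iposet) (hn : P.n = n) : inva P ∈ TT n := by
  rw [inva, mem_TT]
  refine ⟨hn ▸ k_le_n P, hn ▸ m_le_n P, SA_subset P, SB_subset P,
    (card_SA_SB P).symm, hn ▸ inva_bound P⟩

end

end Iposet

open Iposet in
/-- The number of isomorphism classes of interface-consistent discrete
iposets on `n` points. -/
theorem count_ic_discrete (n : ℕ) :
    Nat.card (Quot (fun (P Q : {P : Iposet // P.n = n ∧ Discrete P ∧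
        InterfaceConsistent P}) => Iso P.1 Q.1)) =
      ∑ a ∈ Finset.range (n + 1), ∑ b ∈ Finset.range (n + 1),
        ∑ u ∈ Finset.Icc (max 0 (a + b - n)) (min a b),
          a.choose u * b.choose u := by
  simp only [Nat.zero_max]
  rw [← card_TT n]
  have hbij : Function.Bijective (Quot.lift
      (fun P : {P : Iposet // P.n = n ∧ Discrete P ∧ InterfaceConsistent P} =>
        (⟨inva P.1, inva_mem_TT P.1 P.2.1⟩ : {q // q ∈ TT n}))
      (fun P Q h => Subtype.ext (inva_iso h))) := by
    constructor
    · intro x y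
      induction x using Quot.ind with | _ P => ?_
      induction y using Quot.ind with | _ Q => ?_
      intro h
      have h' : inva P.1 = inva Q.1 := congrArg Subtype.val h
      exact Quot.sound (iso_of_inva_eq (P.2.1.trans Q.2.1.symm) P.2.2.1 Q.2.2.1
        P.2.2.2 Q.2.2.2 h')
    · rintro ⟨⟨a, b, A, B⟩, hq⟩
      obtain ⟨ha, hb, hA, hB, hcard, hbn⟩ := mem_TT.1 hq
      refine ⟨Quot.mk _ ⟨canon n a b A B hA hB hcard ha hbn, rfl, canon_discrete, canon_IC⟩, ?_⟩
      exact Subtype.ext (canon_inva (hA := hA) (hB := hB) (hcard := hcard) (han := ha) (hbn := hbn))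
  rw [Nat.card_eq_of_bijective _ hbij]
  exact Nat.card_eq_finsetCard _
end

section
/- For every natural number n, the number of isomorphism classes of discrete iposets on n points equals ∑_{s=0}^n ∑_{t=0}^n ∑_{u=max(0,s+t−n)}^{min(s,t)} C(s,u)·C(t,u)·u!. -/
section CountAux

open Iposet Finset

/-- Extend an injective-on-a-set map between equinumerous fintypes to an equivalence. -/
lemma exists_equiv_extend {α β : Type*} [Fintype α] [Fintype β] [DecidableEq α] [DecidableEq β]
    (hcard : Fintype.card α = Fintype.card β) (p : α → Prop) [DecidablePred p]
    (g : α → β) (hg : Set.InjOn g {x | p x}) :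
    ∃ f : α ≃ β, ∀ x, p x → f x = g x := by
  classical
  set A : Set α := {x | p x} with hA
  have hcompl : Fintype.card (Aᶜ : Set α) = Fintype.card ((g '' A)ᶜ : Set β) := by
    rw [Fintype.card_compl_set, Fintype.card_compl_set, hcard,
      Fintype.card_congr (Equiv.Set.imageOfInjOn g A hg)]
  obtain ⟨h⟩ := Fintype.card_eq.mp hcompl
  refine ⟨(Equiv.Set.sumCompl A).symm.trans
    (((Equiv.Set.imageOfInjOn g A hg).sumCongr h).trans
      (Equiv.Set.sumCompl (g '' A))), fun x hx => ?_⟩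
  have h1 : (Equiv.Set.sumCompl A).symm x = Sum.inl ⟨x, hx⟩ := by
    rw [Equiv.symm_apply_eq]
    exact (Equiv.Set.sumCompl_apply_inl A ⟨x, hx⟩).symm
  simp only [Equiv.trans_apply, h1, Equiv.sumCongr_apply, Sum.map_inl,
    Equiv.Set.sumCompl_apply_inl]
  rfl

/-- Canonical discrete iposet built from interface data: `k` sources, `m` targets,
the targets indexed by `S` glued onto sources via `e`. -/
def realize (n k m : ℕ) (S : Finset (Fin m)) (e : {x // x ∈ S} ↪ Fin k)
    (hkn : k ≤ n) (hc : k + m ≤ n + S.card) : Iposet where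
  n := n
  lt _ _ := False
  lt_irrefl _ := not_false
  lt_trans _ _ _ h _ := h.elim
  k := k
  m := m
  s i := Fin.castLE hkn i
  t j :=
    if h : j ∈ S then Fin.castLE hkn (e ⟨j, h⟩)
    else ⟨k + (((Sᶜ).orderIsoOfFin rfl).symm ⟨j, Finset.mem_compl.mpr h⟩ : Fin (Sᶜ).card).1, by
      have h1 : ((((Sᶜ).orderIsoOfFin rfl).symm ⟨j, Finset.mem_compl.mpr h⟩ :
          Fin (Sᶜ).card) : ℕ) < (Sᶜ).card := Fin.is_lt _
      have h2 : (Sᶜ).card = m - S.card := by simp [Finset.card_compl]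
      have h3 : S.card ≤ m := by simpa using Finset.card_le_univ S
      omega⟩
  s_inj := Fin.castLE_injective hkn
  t_inj := by
    intro j1 j2 hj
    by_cases h1 : j1 ∈ S <;> by_cases h2 : j2 ∈ S <;> simp only [h1, h2, dif_pos, dif_neg,
      not_false_iff] at hj
    · exact Subtype.mk_eq_mk.mp (e.injective (Fin.castLE_injective hkn hj))
    · exact absurd (congrArg Fin.val hj) (by simp; omega)
    · exact absurd (congrArg Fin.val hj) (by simp; omega)
    · have := congrArg Fin.val hj
      simp only at this
      have h4 : (((Sᶜ).orderIsoOfFin rfl).symm ⟨j1, Finset.mem_compl.mpr h1⟩ : Fin (Sᶜ).card)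
          = ((Sᶜ).orderIsoOfFin rfl).symm ⟨j2, Finset.mem_compl.mpr h2⟩ := by
        apply Fin.ext; omega
      have := congrArg (fun z => ((((Sᶜ).orderIsoOfFin rfl)) z : Fin m)) h4
      simpa using this
  s_min _ _ h := h
  t_max _ _ h := h

lemma realize_discrete (n k m : ℕ) (S : Finset (Fin m)) (e : {x // x ∈ S} ↪ Fin k)
    (hkn : k ≤ n) (hc : k + m ≤ n + S.card) : Discrete (realize n k m S e hkn hc) :=
  fun _ _ h => h

lemma realize_t_val_pos (n k m : ℕ) (S : Finset (Fin m)) (e : {x // x ∈ S} ↪ Fin k)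
    (hkn : k ≤ n) (hc : k + m ≤ n + S.card) (j : Fin m) (h : j ∈ S) :
    (((realize n k m S e hkn hc).t j) : ℕ) = (e ⟨j, h⟩ : ℕ) := by
  simp only [realize, dif_pos h, Fin.coe_castLE]

lemma realize_t_val_neg (n k m : ℕ) (S : Finset (Fin m)) (e : {x // x ∈ S} ↪ Fin k)
    (hkn : k ≤ n) (hc : k + m ≤ n + S.card) (j : Fin m) (h : j ∉ S) :
    (((realize n k m S e hkn hc).t j) : ℕ) =
      k + (((Sᶜ).orderIsoOfFin rfl).symm ⟨j, Finset.mem_compl.mpr h⟩ : ℕ) := by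
  simp only [realize, dif_neg h]

/-- Concrete invariant of an iposet: the arities and the matched interface pairs. -/
def inv (P : Iposet) : ℕ × ℕ × Finset (ℕ × ℕ) :=
  (P.k, P.m,
    ((Finset.univ : Finset (Fin P.k × Fin P.m)).filter fun p => P.s p.1 = P.t p.2).image
      fun p => ((p.1 : ℕ), (p.2 : ℕ)))

lemma mem_inv (P : Iposet) (a b : ℕ) :
    (a, b) ∈ (inv P).2.2 ↔ ∃ (i : Fin P.k) (j : Fin P.m),
      P.s i = P.t j ∧ (i : ℕ) = a ∧ (j : ℕ) = b := by
  simp only [inv, Finset.mem_image, Finset.mem_filter, Finset.mem_univ, true_and, Prod.ext_iff]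
  constructor
  · rintro ⟨⟨i, j⟩, h, h1, h2⟩; exact ⟨i, j, h, h1, h2⟩
  · rintro ⟨i, j, h, h1, h2⟩; exact ⟨⟨i, j⟩, h, h1, h2⟩

lemma inv_eq_of_iso {P Q : Iposet} (h : Iso P Q) : inv P = inv Q := by
  obtain ⟨hk, hm, f, _, hs, ht⟩ := h
  have key : ∀ (i : Fin P.k) (j : Fin P.m),
      P.s i = P.t j ↔ Q.s (Fin.cast hk i) = Q.t (Fin.cast hm j) := by
    intro i j
    rw [← hs, ← ht]
    exact ⟨fun h => congrArg f h, fun h => f.injective h⟩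
  refine Prod.ext hk (Prod.ext hm ?_)
  ext ⟨a, b⟩
  rw [mem_inv, mem_inv]
  constructor
  · rintro ⟨i, j, hij, rfl, rfl⟩
    exact ⟨Fin.cast hk i, Fin.cast hm j, (key i j).mp hij, rfl, rfl⟩
  · rintro ⟨i, j, hij, rfl, rfl⟩
    refine ⟨Fin.cast hk.symm i, Fin.cast hm.symm j, ?_, rfl, rfl⟩
    rw [key]
    simpa using hij

def gmap (P : Iposet) (S : Finset (Fin P.m)) (x : Fin P.n) : Fin P.n :=
  if h : (x : ℕ) < P.k then P.s ⟨x, h⟩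
  else if h2 : (x : ℕ) - P.k < (Sᶜ).card then
    P.t (((Sᶜ).orderIsoOfFin rfl) ⟨(x : ℕ) - P.k, h2⟩)
  else x

lemma gmap_lt (P : Iposet) (S : Finset (Fin P.m)) (x : Fin P.n) (h : (x : ℕ) < P.k) :
    gmap P S x = P.s ⟨x, h⟩ := dif_pos h

lemma gmap_ge (P : Iposet) (S : Finset (Fin P.m)) (x : Fin P.n) (h : ¬ (x : ℕ) < P.k)
    (h2 : (x : ℕ) - P.k < (Sᶜ).card) :
    gmap P S x = P.t (((Sᶜ).orderIsoOfFin rfl) ⟨(x : ℕ) - P.k, h2⟩) := by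
  rw [gmap, dif_neg h, dif_pos h2]

lemma gmap_injOn (P : Iposet) (S : Finset (Fin P.m))
    (hS : ∀ j, j ∈ S ↔ ∃ i, P.s i = P.t j) :
    Set.InjOn (gmap P S) {x | (x : ℕ) < P.k + (Sᶜ).card} := by
  have notS : ∀ jc : Fin P.m, jc ∈ Sᶜ → ¬ ∃ i, P.s i = P.t jc := by
    intro jc hjc
    rw [← hS]
    exact Finset.mem_compl.mp hjc
  intro x hx y hy hxy
  simp only [Set.mem_setOf_eq] at hx hy
  by_cases h1 : (x : ℕ) < P.k <;> by_cases h2 : (y : ℕ) < P.k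
  · rw [gmap_lt P S x h1, gmap_lt P S y h2] at hxy
    have h5 : ((⟨(x : ℕ), h1⟩ : Fin P.k) : ℕ) = ((⟨(y : ℕ), h2⟩ : Fin P.k) : ℕ) :=
      congrArg Fin.val (P.s_inj hxy)
    exact Fin.ext h5
  · rw [gmap_lt P S x h1, gmap_ge P S y h2 (by omega)] at hxy
    exact absurd ⟨_, hxy⟩ (notS _ (Finset.coe_mem _))
  · rw [gmap_ge P S x h1 (by omega), gmap_lt P S y h2] at hxy
    exact absurd ⟨_, hxy.symm⟩ (notS _ (Finset.coe_mem _))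
  · rw [gmap_ge P S x h1 (by omega), gmap_ge P S y h2 (by omega)] at hxy
    have h3 := ((Sᶜ).orderIsoOfFin rfl).injective (Subtype.coe_injective (P.t_inj hxy))
    have h4 : ((⟨(x : ℕ) - P.k, by omega⟩ : Fin (Sᶜ).card) : ℕ)
        = ((⟨(y : ℕ) - P.k, by omega⟩ : Fin (Sᶜ).card) : ℕ) := congrArg Fin.val h3
    simp only at h4
    exact Fin.ext (by omega)

lemma exists_realize_iso (n : ℕ) (P : Iposet) (hn : P.n = n) (hd : Discrete P) :
    ∃ (S : Finset (Fin P.m)) (e : {x // x ∈ S} ↪ Fin P.k) (hkn : P.k ≤ n)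
      (hmn : P.m ≤ n) (hc : P.k + P.m ≤ n + S.card),
      Iso (realize n P.k P.m S e hkn hc) P := by
  subst hn
  have hkn : P.k ≤ P.n := by simpa using Fintype.card_le_of_injective P.s P.s_inj
  have hmn : P.m ≤ P.n := by simpa using Fintype.card_le_of_injective P.t P.t_inj
  set S : Finset (Fin P.m) := Finset.univ.filter (fun j => ∃ i, P.s i = P.t j) with hSdef
  have hS : ∀ j, j ∈ S ↔ ∃ i, P.s i = P.t j := by
    intro j; simp [hSdef]
  have hu : ∀ j : {x // x ∈ S}, ∃! i, P.s i = P.t j.1 := by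
    rintro ⟨j, hj⟩
    obtain ⟨i, hi⟩ := (hS j).mp hj
    exact ⟨i, hi, fun i' hi' => P.s_inj (hi'.trans hi.symm)⟩
  have espec0 : ∀ j : {x // x ∈ S},
      P.s (Fintype.choose (fun i => P.s i = P.t j.1) (hu j)) = P.t j.1 :=
    fun j => Fintype.choose_spec (fun i => P.s i = P.t j.1) (hu j)
  set e : {x // x ∈ S} ↪ Fin P.k :=
    ⟨fun j => Fintype.choose (fun i => P.s i = P.t j.1) (hu j), by
      intro j1 j2 h
      simp only at h
      have h6 := congrArg P.s h
      rw [espec0 j1, espec0 j2] at h6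
      exact Subtype.ext (P.t_inj h6)⟩ with hedef
  have espec : ∀ j : {x // x ∈ S}, P.s (e j) = P.t j.1 := fun j => espec0 j
  have hc : P.k + P.m ≤ P.n + S.card := by
    classical
    set A : Finset (Fin P.n) := Finset.univ.image P.s with hA
    set B : Finset (Fin P.n) := Finset.univ.image P.t with hB
    have cardA : A.card = P.k := by
      rw [hA, Finset.card_image_of_injective _ P.s_inj, Finset.card_univ, Fintype.card_fin]
    have cardB : B.card = P.m := by
      rw [hB, Finset.card_image_of_injective _ P.t_inj, Finset.card_univ, Fintype.card_fin]
    have hAB : A ∩ B = S.image P.t := by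
      ext x
      simp only [hA, hB, Finset.mem_inter, Finset.mem_image, Finset.mem_univ, true_and]
      constructor
      · rintro ⟨⟨i, hi⟩, ⟨j, hj⟩⟩
        exact ⟨j, (hS j).mpr ⟨i, hi.trans hj.symm⟩, hj⟩
      · rintro ⟨j, hj, hjx⟩
        obtain ⟨i, hi⟩ := (hS j).mp hj
        exact ⟨⟨i, hi.trans hjx⟩, ⟨j, hjx⟩⟩
    have cardInter : (A ∩ B).card = S.card := by
      rw [hAB, Finset.card_image_of_injective _ P.t_inj]
    have hun : (A ∪ B).card ≤ P.n := by
      have := Finset.card_le_univ (A ∪ B)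
      simpa using this
    have key := Finset.card_union_add_card_inter A B
    omega
  obtain ⟨f, hf⟩ := exists_equiv_extend (α := Fin P.n) (β := Fin P.n) rfl
    (fun x => (x : ℕ) < P.k + (Sᶜ).card) (gmap P S) (gmap_injOn P S hS)
  refine ⟨S, e, hkn, hmn, hc, rfl, rfl, f, ?_, ?_, ?_⟩
  · exact fun x y => iff_of_false (fun h => h) (hd _ _)
  · have main_s : ∀ (i : Fin P.k), f (Fin.castLE hkn i) = P.s i := by
      intro i
      have hp : ((Fin.castLE hkn i : Fin P.n) : ℕ) < P.k + (Sᶜ).card := by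
        have := i.isLt
        simp only [Fin.coe_castLE]
        omega
      rw [hf _ hp, gmap_lt P S _ (by simpa using i.isLt)]
      exact congrArg P.s (Fin.ext rfl)
    exact fun i => main_s i
  · have hcc : (Sᶜ).card = P.m - S.card := by simp [Finset.card_compl]
    have hsc : S.card ≤ P.m := by simpa using Finset.card_le_univ S
    have main_t : ∀ (j : Fin P.m), f ((realize P.n P.k P.m S e hkn hc).t j) = P.t j := by
      intro j
      set x := (realize P.n P.k P.m S e hkn hc).t j with hxdef
      by_cases h : j ∈ S
      · have hval : (x : ℕ) = (e ⟨j, h⟩ : ℕ) := by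
          rw [hxdef]; exact realize_t_val_pos P.n P.k P.m S e hkn hc j h
        have hek := (e ⟨j, h⟩).isLt
        have hlt : (x : ℕ) < P.k := by omega
        rw [hf x (by omega), gmap_lt P S x hlt]
        have harg : (⟨(x : ℕ), hlt⟩ : Fin P.k) = e ⟨j, h⟩ := Fin.ext hval
        rw [harg, espec ⟨j, h⟩]
      · have hidx := (((Sᶜ).orderIsoOfFin rfl).symm ⟨j, Finset.mem_compl.mpr h⟩).isLt
        have hval : (x : ℕ) =
            P.k + (((Sᶜ).orderIsoOfFin rfl).symm ⟨j, Finset.mem_compl.mpr h⟩ : ℕ) := by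
          rw [hxdef]; exact realize_t_val_neg P.n P.k P.m S e hkn hc j h
        have hge : ¬ (x : ℕ) < P.k := by omega
        have h2 : (x : ℕ) - P.k < (Sᶜ).card := by omega
        rw [hf x (by omega), gmap_ge P S x hge h2]
        have harg : (⟨(x : ℕ) - P.k, h2⟩ : Fin (Sᶜ).card) =
            ((Sᶜ).orderIsoOfFin rfl).symm ⟨j, Finset.mem_compl.mpr h⟩ :=
          Fin.ext (show (x : ℕ) - P.k = _ by omega)
        rw [harg]
        have hsymm := ((Sᶜ).orderIsoOfFin rfl).apply_symm_apply ⟨j, Finset.mem_compl.mpr h⟩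
        rw [hsymm]
    exact fun j => main_t j

lemma realize_s_eq_t_iff (n k m : ℕ) (S : Finset (Fin m)) (e : {x // x ∈ S} ↪ Fin k)
    (hkn : k ≤ n) (hc : k + m ≤ n + S.card) (i : Fin k) (j : Fin m) :
    (realize n k m S e hkn hc).s i = (realize n k m S e hkn hc).t j ↔
      ∃ h : j ∈ S, e ⟨j, h⟩ = i := by
  have h1 : ((realize n k m S e hkn hc).s i : ℕ) = (i : ℕ) := rfl
  by_cases h : j ∈ S
  · have h2 := realize_t_val_pos n k m S e hkn hc j h
    constructor
    · intro heq
      have hv := congrArg Fin.val heq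
      exact ⟨h, Fin.ext (by omega)⟩
    · rintro ⟨h', rfl⟩
      apply Fin.ext
      have h2' := realize_t_val_pos n k m S e hkn hc j h'
      exact h2'.symm
  · have h2 := realize_t_val_neg n k m S e hkn hc j h
    apply iff_of_false
    · intro heq
      have hv := congrArg Fin.val heq
      have h3 := i.isLt
      omega
    · rintro ⟨h', _⟩; exact h h'

lemma mem_inv_realize (n k m : ℕ) (S : Finset (Fin m)) (e : {x // x ∈ S} ↪ Fin k)
    (hkn : k ≤ n) (hc : k + m ≤ n + S.card) (a b : ℕ) :
    (a, b) ∈ (inv (realize n k m S e hkn hc)).2.2 ↔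
      ∃ (j : Fin m) (h : j ∈ S), ((e ⟨j, h⟩ : Fin k) : ℕ) = a ∧ (j : ℕ) = b := by
  rw [mem_inv]
  constructor
  · rintro ⟨i, j, hij, rfl, rfl⟩
    obtain ⟨h, he⟩ := (realize_s_eq_t_iff n k m S e hkn hc i j).mp hij
    exact ⟨j, h, by rw [he], rfl⟩
  · rintro ⟨j, h, ha, hb⟩
    exact ⟨e ⟨j, h⟩, j, (realize_s_eq_t_iff n k m S e hkn hc _ j).mpr ⟨h, rfl⟩, ha, hb⟩

/-- The type of isomorphism invariants of discrete iposets on `n` points. -/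
abbrev DiscInv (n : ℕ) : Type := Σ (k : Fin (n+1)) (m : Fin (n+1)),
  {p : Σ S : Finset (Fin (m : ℕ)), ({x // x ∈ S} ↪ Fin (k : ℕ)) //
    (k : ℕ) + (m : ℕ) ≤ n + p.1.card}

def J (n : ℕ) (d : DiscInv n) :
    Quot (fun (P Q : {P : Iposet // P.n = n ∧ Discrete P}) => Iso P.1 Q.1) :=
  Quot.mk _ ⟨realize n d.1 d.2.1 d.2.2.1.1 d.2.2.1.2
    (Nat.lt_succ_iff.mp d.1.isLt) d.2.2.2,
    rfl, realize_discrete _ _ _ _ _ _ _⟩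

lemma J_surjective (n : ℕ) : Function.Surjective (J n) := by
  intro q
  induction q using Quot.ind with
  | _ P =>
    obtain ⟨P, hn, hdisc⟩ := P
    obtain ⟨S, e, hkn, hmn, hc, hiso⟩ := exists_realize_iso n P hn hdisc
    refine ⟨⟨⟨P.k, by omega⟩, ⟨P.m, by omega⟩, ⟨⟨S, e⟩, hc⟩⟩, ?_⟩
    exact Quot.sound hiso

lemma J_injective (n : ℕ) : Function.Injective (J n) := by
  intro d1 d2 hJ
  obtain ⟨⟨k1, hk1⟩, ⟨m1, hm1⟩, ⟨⟨S1, e1⟩, hc1⟩⟩ := d1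
  obtain ⟨⟨k2, hk2⟩, ⟨m2, hm2⟩, ⟨⟨S2, e2⟩, hc2⟩⟩ := d2
  have hinv := congrArg (Quot.lift (fun (P : {P : Iposet // P.n = n ∧ Discrete P}) => inv P.1)
    (fun _ _ h => inv_eq_of_iso h)) hJ
  have hk : k1 = k2 := congrArg (fun z => z.1) hinv
  have hm : m1 = m2 := congrArg (fun z => z.2.1) hinv
  subst hk; subst hm
  have hM : (inv (realize n k1 m1 S1 e1 (Nat.lt_succ_iff.mp hk1) hc1)).2.2
      = (inv (realize n k1 m1 S2 e2 (Nat.lt_succ_iff.mp hk1) hc2)).2.2 :=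
    congrArg (fun z => z.2.2) hinv
  have hS : S1 = S2 := by
    ext j
    constructor
    · intro hj
      have hmem : (((e1 ⟨j, hj⟩ : Fin k1) : ℕ), (j : ℕ)) ∈
          (inv (realize n k1 m1 S1 e1 (Nat.lt_succ_iff.mp hk1) hc1)).2.2 :=
        (mem_inv_realize n k1 m1 S1 e1 _ hc1 _ _).mpr ⟨j, hj, rfl, rfl⟩
      rw [hM] at hmem
      obtain ⟨j', h', _, hb⟩ := (mem_inv_realize n k1 m1 S2 e2 _ hc2 _ _).mp hmem
      rwa [← Fin.ext hb]
    · intro hj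
      have hmem : (((e2 ⟨j, hj⟩ : Fin k1) : ℕ), (j : ℕ)) ∈
          (inv (realize n k1 m1 S2 e2 (Nat.lt_succ_iff.mp hk1) hc2)).2.2 :=
        (mem_inv_realize n k1 m1 S2 e2 _ hc2 _ _).mpr ⟨j, hj, rfl, rfl⟩
      rw [← hM] at hmem
      obtain ⟨j', h', _, hb⟩ := (mem_inv_realize n k1 m1 S1 e1 _ hc1 _ _).mp hmem
      rwa [← Fin.ext hb]
  subst hS
  have he : e1 = e2 := by
    apply DFunLike.ext
    rintro ⟨j, hj⟩
    have hmem : (((e1 ⟨j, hj⟩ : Fin k1) : ℕ), (j : ℕ)) ∈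
        (inv (realize n k1 m1 S1 e1 (Nat.lt_succ_iff.mp hk1) hc1)).2.2 :=
      (mem_inv_realize n k1 m1 S1 e1 _ hc1 _ _).mpr ⟨j, hj, rfl, rfl⟩
    rw [hM] at hmem
    obtain ⟨j', h', ha, hb⟩ := (mem_inv_realize n k1 m1 S1 e2 _ hc2 _ _).mp hmem
    have hjj : j' = j := Fin.ext hb
    subst hjj
    exact Fin.ext (ha.symm)
  subst he
  rfl

lemma card_inner (n K M : ℕ) :
    Fintype.card {p : Σ S : Finset (Fin M), ({x // x ∈ S} ↪ Fin K) // K + M ≤ n + p.1.card}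
      = ∑ u ∈ Finset.Icc (max 0 (K + M - n)) (min K M),
          K.choose u * M.choose u * u.factorial := by
  classical
  rw [Fintype.card_congr (Equiv.subtypeSigmaEquiv
    (fun S : Finset (Fin M) => ({x // x ∈ S} ↪ Fin K))
    (fun S => K + M ≤ n + S.card))]
  rw [Fintype.card_sigma]
  have step1 : ∀ S : {S : Finset (Fin M) // K + M ≤ n + S.card},
      Fintype.card ({x // x ∈ S.1} ↪ Fin K) = K.descFactorial S.1.card := by
    intro S
    rw [Fintype.card_embedding_eq, Fintype.card_coe, Fintype.card_fin]
  rw [Finset.sum_congr rfl (fun S _ => step1 S)]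
  rw [← Finset.sum_subtype
    (Finset.univ.filter fun S : Finset (Fin M) => K + M ≤ n + S.card)
    (by intro x; simp) (fun S : Finset (Fin M) => K.descFactorial S.card)]
  rw [Finset.sum_filter, ← Finset.powerset_univ, Finset.sum_powerset]
  have hcard : (Finset.univ : Finset (Fin M)).card = M := by simp
  rw [hcard]
  have hinner : ∀ j ∈ Finset.range (M+1),
      (∑ S ∈ Finset.powersetCard j (Finset.univ : Finset (Fin M)),
        if K + M ≤ n + S.card then K.descFactorial S.card else 0)
      = M.choose j * (if K + M ≤ n + j then K.descFactorial j else 0) := by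
    intro j _
    rw [Finset.sum_congr rfl (fun S hS => by
      rw [(Finset.mem_powersetCard.mp hS).2])]
    rw [Finset.sum_const, Finset.card_powersetCard, hcard, smul_eq_mul]
  rw [Finset.sum_congr rfl hinner]
  have hsub : Finset.Icc (max 0 (K + M - n)) (min K M) ⊆ Finset.range (M + 1) := by
    intro u hu
    rw [Finset.mem_Icc] at hu
    rw [Finset.mem_range]
    omega
  rw [← Finset.sum_subset hsub (fun u hu hnu => ?_)]
  · refine Finset.sum_congr rfl (fun u hu => ?_)
    rw [Finset.mem_Icc] at hu
    rw [if_pos (by omega), Nat.descFactorial_eq_factorial_mul_choose]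
    ring
  · rw [Finset.mem_range] at hu
    rw [Finset.mem_Icc] at hnu
    push_neg at hnu
    by_cases hcond : K + M ≤ n + u
    · have hKu : K < u := by
        have := hnu (by omega)
        omega
      rw [if_pos hcond, Nat.descFactorial_eq_zero_iff_lt.mpr hKu, mul_zero]
    · rw [if_neg hcond, mul_zero]

lemma card_DiscInv (n : ℕ) :
    Fintype.card (DiscInv n) = ∑ a ∈ Finset.range (n + 1), ∑ b ∈ Finset.range (n + 1),
      ∑ u ∈ Finset.Icc (max 0 (a + b - n)) (min a b),
        a.choose u * b.choose u * u.factorial := by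
  rw [Fintype.card_sigma]
  rw [Finset.sum_congr rfl (fun k _ => Fintype.card_sigma)]
  rw [← Fin.sum_univ_eq_sum_range (fun a => ∑ b ∈ Finset.range (n + 1),
    ∑ u ∈ Finset.Icc (max 0 (a + b - n)) (min a b),
      a.choose u * b.choose u * u.factorial) (n+1)]
  refine Finset.sum_congr rfl (fun k _ => ?_)
  rw [← Fin.sum_univ_eq_sum_range (fun b =>
    ∑ u ∈ Finset.Icc (max 0 ((k : ℕ) + b - n)) (min (k : ℕ) b),
      (k : ℕ).choose u * b.choose u * u.factorial) (n+1)]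
  exact Finset.sum_congr rfl (fun m _ => card_inner n (k : ℕ) (m : ℕ))

end CountAux


open Iposet in
/-- The number of isomorphism classes of discrete iposets on `n` points. -/
theorem count_discrete (n : ℕ) :
    Nat.card (Quot (fun (P Q : {P : Iposet // P.n = n ∧ Discrete P}) =>
        Iso P.1 Q.1)) =
      ∑ a ∈ Finset.range (n + 1), ∑ b ∈ Finset.range (n + 1),
        ∑ u ∈ Finset.Icc (max 0 (a + b - n)) (min a b),
          a.choose u * b.choose u * u.factorial := by
  rw [← Nat.card_eq_of_bijective (J n) ⟨J_injective n, J_surjective n⟩,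
    Nat.card_eq_fintype_card]
  exact card_DiscInv n
end

section
/- For every natural number n, ∑_{s=0}^n ∑_{t=0}^n ∑_{u=max(0,s+t−n)}^{min(s,t)} C(s,u)·C(t,u) = ∑_{i=0}^n C(n+2+i, n−i). -/
open Finset

theorem hockey (u k : ℕ) : ∑ a ∈ range (k + 1), (u + a).choose a = (u + k + 1).choose k := by
  have h : ∑ a ∈ range (k + 1), (u + a).choose a = ∑ m ∈ Finset.Icc u (u + k), m.choose u := by
    rw [← Finset.Ico_add_one_right_eq_Icc, Finset.sum_Ico_eq_sum_range]
    have : u + k + 1 - u = k + 1 := by omega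
    rw [this]
    exact Finset.sum_congr rfl fun a _ => Nat.choose_symm_add.symm
  rw [h, Nat.sum_Icc_choose]
  have : u + k + 1 = (u + 1) + k := by omega
  rw [this]; exact Nat.choose_symm_add

theorem hockey' (u k : ℕ) : ∑ b ∈ range (k + 1), (u + b).choose u = (u + k + 1).choose k := by
  rw [← hockey]
  exact Finset.sum_congr rfl fun b _ => Nat.choose_symm_add

theorem Tlem (u v : ℕ) : ∀ k, ∑ a ∈ range (k + 1), (u + a).choose a * (v + (k - a)).choose (k - a)
    = (u + v + k + 1).choose k := by
  induction v with
  | zero =>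
    intro k
    have h : ∀ a ∈ range (k + 1), (u + a).choose a * (0 + (k - a)).choose (k - a)
        = (u + a).choose a := by
      intro a _; rw [zero_add, Nat.choose_self, mul_one]
    rw [Finset.sum_congr rfl h, hockey]; norm_num
  | succ v ih =>
    intro k
    induction k with
    | zero => simp
    | succ k ihk =>
      rw [Finset.sum_range_succ]
      have hsplit : ∀ a ∈ Finset.range (k + 1),
          (u + a).choose a * ((v + 1) + (k + 1 - a)).choose (k + 1 - a)
          = (u + a).choose a * ((v + 1) + (k - a)).choose (k - a)
            + (u + a).choose a * (v + (k + 1 - a)).choose (k + 1 - a) := by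
        intro a ha
        rw [Finset.mem_range] at ha
        have h1 : k + 1 - a = (k - a) + 1 := by omega
        have h2 : (v + 1) + (k + 1 - a) = (v + (k + 1 - a)) + 1 := by omega
        have h3 : v + (k - a + 1) = (v + 1) + (k - a) := by omega
        rw [h2, h1, Nat.choose_succ_succ, h3, Nat.mul_add]
      rw [Finset.sum_congr rfl hsplit, Finset.sum_add_distrib, ihk, add_assoc]
      have h4 : ∑ a ∈ range (k + 1), (u + a).choose a * (v + (k + 1 - a)).choose (k + 1 - a)
          + (u + (k + 1)).choose (k + 1) * ((v + 1) + (k + 1 - (k + 1))).choose (k + 1 - (k + 1))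
          = (u + v + (k + 1) + 1).choose (k + 1) := by
        have h := ih (k + 1)
        rw [Finset.sum_range_succ] at h
        simpa using h
      rw [h4]
      have h5 : u + (v + 1) + (k + 1) + 1 = (u + v + (k + 1) + 1) + 1 := by omega
      rw [h5, Nat.choose_succ_succ]
      congr 2
      omega

theorem step3 (n u : ℕ) (hu : u ≤ n) :
    ∑ s ∈ range (n + 1), ∑ t ∈ range (n + 1),
      (if s + t - n ≤ u ∧ u ≤ s ∧ u ≤ t then s.choose u * t.choose u else 0)
    = (n + 2 + u).choose (n - u) := by
  have hsub : Finset.Ico u (n + 1) ⊆ range (n + 1) := by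
    intro x hx; rw [Finset.mem_Ico] at hx; rw [Finset.mem_range]; omega
  have hzs : ∀ s ∈ range (n + 1), s ∉ Finset.Ico u (n + 1) →
      ∑ t ∈ range (n + 1),
        (if s + t - n ≤ u ∧ u ≤ s ∧ u ≤ t then s.choose u * t.choose u else 0) = 0 := by
    intro s hs hns
    rw [Finset.mem_range] at hs
    rw [Finset.mem_Ico] at hns
    apply Finset.sum_eq_zero
    intro t _
    rw [if_neg]
    rintro ⟨-, h2, -⟩
    omega
  rw [← Finset.sum_subset hsub hzs]
  have hzt : ∀ s ∈ Finset.Ico u (n + 1),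
      ∑ t ∈ range (n + 1),
        (if s + t - n ≤ u ∧ u ≤ s ∧ u ≤ t then s.choose u * t.choose u else 0)
      = ∑ t ∈ Finset.Ico u (n + 1),
        (if s + t - n ≤ u ∧ u ≤ s ∧ u ≤ t then s.choose u * t.choose u else 0) := by
    intro s _
    rw [← Finset.sum_subset hsub]
    intro t ht hnt
    rw [Finset.mem_range] at ht
    rw [Finset.mem_Ico] at hnt
    rw [if_neg]
    rintro ⟨-, -, h3⟩
    omega
  rw [Finset.sum_congr rfl hzt, Finset.sum_Ico_eq_sum_range]
  have hm : n + 1 - u = (n - u) + 1 := by omega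
  rw [hm]
  have hinner : ∀ a ∈ range (n - u + 1),
      ∑ t ∈ Finset.Ico u (n + 1),
        (if (u + a) + t - n ≤ u ∧ u ≤ u + a ∧ u ≤ t then (u + a).choose u * t.choose u else 0)
      = (u + a).choose u * (u + (n - u - a) + 1).choose (n - u - a) := by
    intro a ha
    rw [Finset.mem_range] at ha
    rw [Finset.sum_Ico_eq_sum_range, hm]
    have hcond : ∀ b ∈ range (n - u + 1),
        (if (u + a) + (u + b) - n ≤ u ∧ u ≤ u + a ∧ u ≤ u + b then
            (u + a).choose u * (u + b).choose u else 0)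
        = (if a + b ≤ n - u then (u + a).choose u * (u + b).choose u else 0) := by
      intro b _
      refine if_congr ?_ rfl rfl
      constructor
      · rintro ⟨h1, -, -⟩; omega
      · intro h; refine ⟨by omega, by omega, by omega⟩
    rw [Finset.sum_congr rfl hcond, ← Finset.sum_filter]
    have hfil : Finset.filter (fun b => a + b ≤ n - u) (range (n - u + 1))
        = range (n - u - a + 1) := by
      ext b
      simp only [Finset.mem_filter, Finset.mem_range]
      omega
    rw [hfil, ← Finset.mul_sum, hockey']
  rw [Finset.sum_congr rfl hinner]
  have hT : ∀ a ∈ range (n - u + 1),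
      (u + a).choose u * (u + (n - u - a) + 1).choose (n - u - a)
      = (u + a).choose a * ((u + 1) + ((n - u) - a)).choose ((n - u) - a) := by
    intro a _
    congr 1
    · exact Nat.choose_symm_add
    · congr 1; omega
  rw [Finset.sum_congr rfl hT, Tlem]
  congr 1
  omega




/-- A version of Vandermonde's identity:
`∑_{s,t=0}^n ∑_{u=max(0,s+t−n)}^{min(s,t)} C(s,u)·C(t,u) = ∑_{i=0}^n C(n+2+i, n−i)`. -/
theorem vandermonde_variant (n : ℕ) :
    ∑ s ∈ Finset.range (n + 1), ∑ t ∈ Finset.range (n + 1),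
        ∑ u ∈ Finset.Icc (max 0 (s + t - n)) (min s t),
          s.choose u * t.choose u =
      ∑ i ∈ Finset.range (n + 1), (n + 2 + i).choose (n - i) := by
  have step1 : ∀ s ∈ range (n + 1), ∀ t ∈ range (n + 1),
      ∑ u ∈ Finset.Icc (max 0 (s + t - n)) (min s t), s.choose u * t.choose u
      = ∑ u ∈ range (n + 1),
          (if s + t - n ≤ u ∧ u ≤ s ∧ u ≤ t then s.choose u * t.choose u else 0) := by
    intro s hs t ht
    rw [Finset.mem_range] at hs ht
    have hIcc : Finset.Icc (max 0 (s + t - n)) (min s t)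
        = Finset.filter (fun u => s + t - n ≤ u ∧ u ≤ s ∧ u ≤ t) (range (n + 1)) := by
      ext u
      simp only [Finset.mem_Icc, Finset.mem_filter, Finset.mem_range, le_min_iff, max_le_iff,
        Nat.zero_le, true_and, sup_le_iff]
      omega
    rw [hIcc, Finset.sum_filter]
  calc
    ∑ s ∈ Finset.range (n + 1), ∑ t ∈ Finset.range (n + 1),
        ∑ u ∈ Finset.Icc (max 0 (s + t - n)) (min s t), s.choose u * t.choose u
      = ∑ s ∈ range (n + 1), ∑ t ∈ range (n + 1), ∑ u ∈ range (n + 1),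
          (if s + t - n ≤ u ∧ u ≤ s ∧ u ≤ t then s.choose u * t.choose u else 0) :=
        Finset.sum_congr rfl fun s hs => Finset.sum_congr rfl fun t ht => step1 s hs t ht
    _ = ∑ s ∈ range (n + 1), ∑ u ∈ range (n + 1), ∑ t ∈ range (n + 1),
          (if s + t - n ≤ u ∧ u ≤ s ∧ u ≤ t then s.choose u * t.choose u else 0) :=
        Finset.sum_congr rfl fun s _ => Finset.sum_comm
    _ = ∑ u ∈ range (n + 1), ∑ s ∈ range (n + 1), ∑ t ∈ range (n + 1),
          (if s + t - n ≤ u ∧ u ≤ s ∧ u ≤ t then s.choose u * t.choose u else 0) :=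
        Finset.sum_comm
    _ = ∑ i ∈ Finset.range (n + 1), (n + 2 + i).choose (n - i) := by
        refine Finset.sum_congr rfl fun u hu => ?_
        rw [Finset.mem_range] at hu
        exact step3 n u (by omega)
end

section
/- A finite poset is series-parallel if and only if it does not contain the poset N (four points a,b,c,d with a<c, b<c, b<d and no other relations) as an induced subposet. -/
/-- A finite (strict) poset on `Fin n`. -/
structure FPoset where
  n : ℕ
  lt : Fin n → Fin n → Prop
  lt_irrefl : ∀ x, ¬ lt x x
  lt_trans : ∀ x y z, lt x y → lt y z → lt x z

namespace FPoset

/-- `R` is (isomorphic to) the serial composition (ordinal sum) of `P` and `Q`. -/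
def IsSer (P Q R : FPoset) : Prop :=
  ∃ (f : Fin P.n → Fin R.n) (g : Fin Q.n → Fin R.n),
    Function.Injective f ∧ Function.Injective g ∧
    (∀ x, (∃ a, f a = x) ∨ (∃ b, g b = x)) ∧
    (∀ a b, f a ≠ g b) ∧
    (∀ x y, R.lt x y ↔
      (∃ a b, f a = x ∧ f b = y ∧ P.lt a b) ∨
      (∃ a b, g a = x ∧ g b = y ∧ Q.lt a b) ∨
      (∃ a b, f a = x ∧ g b = y))

/-- `R` is (isomorphic to) the parallel composition (disjoint union) of `P` and `Q`. -/
def IsPar (P Q R : FPoset) : Prop :=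
  ∃ (f : Fin P.n → Fin R.n) (g : Fin Q.n → Fin R.n),
    Function.Injective f ∧ Function.Injective g ∧
    (∀ x, (∃ a, f a = x) ∨ (∃ b, g b = x)) ∧
    (∀ a b, f a ≠ g b) ∧
    (∀ x y, R.lt x y ↔
      (∃ a b, f a = x ∧ f b = y ∧ P.lt a b) ∨
      (∃ a b, g a = x ∧ g b = y ∧ Q.lt a b))

/-- Series-parallel posets: empty, or obtained from the singleton poset by
finitely many serial and parallel compositions. -/
inductive SP : FPoset → Prop
  | empty (P : FPoset) : P.n = 0 → SP P
  | single (P : FPoset) : P.n = 1 → SP P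
  | ser (P Q R : FPoset) : SP P → SP Q → IsSer P Q R → SP R
  | par (P Q R : FPoset) : SP P → SP Q → IsPar P Q R → SP R

/-- `Q` occurs as an induced subposet of `P`. -/
def InducedSub (Q P : FPoset) : Prop :=
  ∃ f : Fin Q.n → Fin P.n, Function.Injective f ∧
    ∀ a b, Q.lt a b ↔ P.lt (f a) (f b)

/-- The poset `N`: four points `0,1,2,3` with `0<2`, `1<2`, `1<3`. -/
def Nposet : FPoset where
  n := 4
  lt x y := (x = 0 ∧ y = 2) ∨ (x = 1 ∧ y = 2) ∨ (x = 1 ∧ y = 3)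
  lt_irrefl := by decide
  lt_trans := by decide

end FPoset

namespace FPoset

instance : DecidableRel Nposet.lt := fun (i j : Fin 4) =>
  inferInstanceAs (Decidable ((i = (0 : Fin 4) ∧ j = (2 : Fin 4)) ∨
    (i = (1 : Fin 4) ∧ j = (2 : Fin 4)) ∨ (i = (1 : Fin 4) ∧ j = (3 : Fin 4))))

open Finset
open scoped Classical

lemma N_of (P : FPoset) {a b c d : Fin P.n}
    (hac : P.lt a c) (hbc : P.lt b c) (hbd : P.lt b d)
    (hab : ¬P.lt a b) (hba : ¬P.lt b a)
    (had : ¬P.lt a d) (hda : ¬P.lt d a)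
    (hcd : ¬P.lt c d) (hdc : ¬P.lt d c) : InducedSub Nposet P := by
  have irr := P.lt_irrefl
  have tr := P.lt_trans
  have hca : ¬ P.lt c a := fun h => irr a (tr a c a hac h)
  have hcb : ¬ P.lt c b := fun h => irr b (tr b c b hbc h)
  have hdb : ¬ P.lt d b := fun h => irr b (tr b d b hbd h)
  have nab : a ≠ b := fun h => had (h ▸ hbd)
  have nac : a ≠ c := fun h => irr a (h ▸ hac)
  have nad : a ≠ d := fun h => hba (h ▸ hbd)
  have nbc : b ≠ c := fun h => irr b (h ▸ hbc)
  have nbd : b ≠ d := fun h => irr b (h ▸ hbd)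
  have ncd : c ≠ d := fun h => had (h ▸ hac)
  refine ⟨![a,b,c,d], ?_, ?_⟩
  · intro i j h
    fin_cases i <;> fin_cases j <;> simp_all <;> tauto
  · intro i j
    fin_cases i <;> fin_cases j <;>
      simp [Nposet, Fin.ext_iff] <;> tauto

def Cmp (P : FPoset) (x y : Fin P.n) : Prop := P.lt x y ∨ P.lt y x

def Step (P : FPoset) (S : Finset (Fin P.n)) (x y : Fin P.n) : Prop :=
  x ∈ S ∧ y ∈ S ∧ P.Cmp x y

def ConnIn (P : FPoset) (S : Finset (Fin P.n)) : Fin P.n → Fin P.n → Prop :=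
  Relation.ReflTransGen (P.Step S)

lemma connIn_symm {P : FPoset} {S : Finset (Fin P.n)} : Symmetric (P.ConnIn S) :=
  by
    haveI : Std.Symm (P.Step S) := ⟨fun _ _ h => ⟨h.2.1, h.1, h.2.2.imp id id |>.symm⟩⟩
    show Symmetric (Relation.ReflTransGen (P.Step S))
    exact fun _ _ h => symm h

lemma connIn_trans {P : FPoset} {S : Finset (Fin P.n)} {x y z : Fin P.n}
    (h1 : P.ConnIn S x y) (h2 : P.ConnIn S y z) : P.ConnIn S x z := h1.trans h2

lemma connIn_mono {P : FPoset} {S T : Finset (Fin P.n)} (hST : S ⊆ T) {x y : Fin P.n}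
    (h : P.ConnIn S x y) : P.ConnIn T x y :=
  Relation.ReflTransGen.mono (r := P.Step S) (p := P.Step T) (fun _ _ h => ⟨hST h.1, hST h.2.1, h.2.2⟩) _ _ h

lemma exists_maximal (P : FPoset) (S : Finset (Fin P.n)) (hS : S.Nonempty) :
    ∃ z ∈ S, ∀ y ∈ S, ¬ P.lt z y := by
  obtain ⟨z, hz, hmax⟩ := S.exists_max_image (fun x => (S.filter (fun y => P.lt y x)).card) hS
  refine ⟨z, hz, fun y hy hlt => ?_⟩
  have hss : S.filter (fun w => P.lt w z) ⊂ S.filter (fun w => P.lt w y) := by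
    constructor
    · intro w hw
      simp only [mem_filter] at hw ⊢
      exact ⟨hw.1, P.lt_trans _ _ _ hw.2 hlt⟩
    · intro hsub
      have hzin : z ∈ S.filter (fun w => P.lt w y) := by simp [hz, hlt]
      have := hsub hzin
      simp only [mem_filter] at this
      exact P.lt_irrefl z this.2
  exact absurd (hmax y hy) (not_le.2 (card_lt_card hss))

def restrict (P : FPoset) (S : Finset (Fin P.n)) : FPoset where
  n := S.card
  lt a b := P.lt (S.equivFin.symm a : Fin P.n) (S.equivFin.symm b)
  lt_irrefl := fun x h => P.lt_irrefl _ h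
  lt_trans := fun _ _ _ h1 h2 => P.lt_trans _ _ _ h1 h2

noncomputable def emb (P : FPoset) (S : Finset (Fin P.n)) (a : Fin (P.restrict S).n) : Fin P.n :=
  (S.equivFin.symm a : Fin P.n)

lemma emb_inj (P : FPoset) (S : Finset (Fin P.n)) : Function.Injective (P.emb S) :=
  fun _ _ h => S.equivFin.symm.injective (Subtype.ext h)

lemma emb_mem (P : FPoset) (S : Finset (Fin P.n)) (a : Fin (P.restrict S).n) :
    P.emb S a ∈ S := (S.equivFin.symm a).2

lemma emb_surj (P : FPoset) (S : Finset (Fin P.n)) {x : Fin P.n} (hx : x ∈ S) :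
    ∃ a, P.emb S a = x := ⟨S.equivFin ⟨x, hx⟩, by simp [emb]⟩

lemma emb_lt (P : FPoset) (S : Finset (Fin P.n)) (a b : Fin (P.restrict S).n) :
    (P.restrict S).lt a b ↔ P.lt (P.emb S a) (P.emb S b) := Iff.rfl

lemma nfree_restrict {P : FPoset} (hN : ¬ InducedSub Nposet P) (S : Finset (Fin P.n)) :
    ¬ InducedSub Nposet (P.restrict S) := by
  rintro ⟨f, hinj, hiff⟩
  exact hN ⟨P.emb S ∘ f, (P.emb_inj S).comp hinj, fun a b => hiff a b⟩

lemma isPar_restrict (P : FPoset) (S : Finset (Fin P.n))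
    (h : ∀ x ∈ S, ∀ y ∉ S, ¬ P.Cmp x y) :
    IsPar (P.restrict S) (P.restrict Sᶜ) P := by
  refine ⟨P.emb S, P.emb Sᶜ, P.emb_inj S, P.emb_inj Sᶜ, ?_, ?_, ?_⟩
  · intro x
    by_cases hx : x ∈ S
    · exact Or.inl (P.emb_surj S hx)
    · exact Or.inr (P.emb_surj Sᶜ (by simpa using hx))
  · intro a b hab
    have h1 := P.emb_mem S a
    have h2 := P.emb_mem Sᶜ b
    rw [hab] at h1
    simp only [mem_compl] at h2
    exact h2 h1
  · intro x y
    constructor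
    · intro hxy
      by_cases hx : x ∈ S <;> by_cases hy : y ∈ S
      · obtain ⟨a, ha⟩ := P.emb_surj S hx
        obtain ⟨b, hb⟩ := P.emb_surj S hy
        exact Or.inl ⟨a, b, ha, hb, by rw [emb_lt, ha, hb]; exact hxy⟩
      · exact absurd (Or.inl hxy) (h x hx y hy)
      · exact absurd (Or.inr hxy) (h y hy x hx)
      · obtain ⟨a, ha⟩ := P.emb_surj Sᶜ (by simpa using hx)
        obtain ⟨b, hb⟩ := P.emb_surj Sᶜ (by simpa using hy)
        exact Or.inr ⟨a, b, ha, hb, by rw [emb_lt, ha, hb]; exact hxy⟩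
    · rintro (⟨a, b, ha, hb, hab⟩ | ⟨a, b, ha, hb, hab⟩) <;>
        · rw [← ha, ← hb]; exact hab

lemma isSer_restrict (P : FPoset) (T : Finset (Fin P.n))
    (h : ∀ x ∉ T, ∀ t ∈ T, P.lt x t) :
    IsSer (P.restrict Tᶜ) (P.restrict T) P := by
  refine ⟨P.emb Tᶜ, P.emb T, P.emb_inj Tᶜ, P.emb_inj T, ?_, ?_, ?_⟩
  · intro x
    by_cases hx : x ∈ T
    · exact Or.inr (P.emb_surj T hx)
    · exact Or.inl (P.emb_surj Tᶜ (by simpa using hx))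
  · intro a b hab
    have h1 := P.emb_mem Tᶜ a
    have h2 := P.emb_mem T b
    rw [hab] at h1
    simp only [mem_compl] at h1
    exact h1 h2
  · intro x y
    constructor
    · intro hxy
      by_cases hx : x ∈ T <;> by_cases hy : y ∈ T
      · obtain ⟨a, ha⟩ := P.emb_surj T hx
        obtain ⟨b, hb⟩ := P.emb_surj T hy
        exact Or.inr (Or.inl ⟨a, b, ha, hb, by rw [emb_lt, ha, hb]; exact hxy⟩)
      · -- x ∈ T, y ∉ T : contradiction
        exact absurd (P.lt_trans y x y (h y hy x hx) hxy) (P.lt_irrefl y)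
      · obtain ⟨a, ha⟩ := P.emb_surj Tᶜ (by simpa using hx)
        obtain ⟨b, hb⟩ := P.emb_surj T hy
        exact Or.inr (Or.inr ⟨a, b, ha, hb⟩)
      · obtain ⟨a, ha⟩ := P.emb_surj Tᶜ (by simpa using hx)
        obtain ⟨b, hb⟩ := P.emb_surj Tᶜ (by simpa using hy)
        exact Or.inl ⟨a, b, ha, hb, by rw [emb_lt, ha, hb]; exact hxy⟩
    · rintro (⟨a, b, ha, hb, hab⟩ | ⟨a, b, ha, hb, hab⟩ | ⟨a, b, ha, hb⟩)
      · rw [← ha, ← hb]; exact hab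
      · rw [← ha, ← hb]; exact hab
      · rw [← ha, ← hb]
        exact h _ (by simpa using P.emb_mem Tᶜ a) _ (P.emb_mem T b)

lemma nlt_above (j : Fin 4) : ¬ Nposet.lt (3 : Fin 4) j := by
  revert j; unfold Nposet; decide

lemma nlt_below (i : Fin 4) : ¬ Nposet.lt i (0 : Fin 4) := by
  revert i; unfold Nposet; decide

lemma N_no_split (s : Fin 4 → Prop) (h1 : ∃ i, s i) (h2 : ∃ j, ¬ s j)
    (h : ∀ i j : Fin 4, ¬ s i → s j → Nposet.lt i j) : False := by
  by_cases h3 : s (3 : Fin 4)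
  · by_cases h0 : s (0 : Fin 4)
    · obtain ⟨j, hj⟩ := h2
      exact nlt_below j (h j (0 : Fin 4) hj h0)
    · have := h (0 : Fin 4) (3 : Fin 4) h0 h3
      revert this; unfold Nposet; decide
  · obtain ⟨i, hi⟩ := h1
    exact nlt_above i (h (3 : Fin 4) i h3 hi)

lemma N_connected (s : Fin 4 → Prop) (h1 : ∃ i, s i) (h2 : ∃ j, ¬ s j)
    (h : ∀ i j : Fin 4, s i → ¬ s j → ¬ Nposet.lt i j ∧ ¬ Nposet.lt j i) : False := by
  have key : ∀ i j : Fin 4, Nposet.lt i j → (s i ↔ s j) := by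
    intro i j hij
    constructor
    · intro hi; by_contra hj; exact (h i j hi hj).1 hij
    · intro hj; by_contra hi; exact (h j i hj hi).2 hij
  have e02 := key (0 : Fin 4) (2 : Fin 4) (by unfold Nposet; decide)
  have e12 := key (1 : Fin 4) (2 : Fin 4) (by unfold Nposet; decide)
  have e13 := key (1 : Fin 4) (3 : Fin 4) (by unfold Nposet; decide)
  by_cases h2s : s (2 : Fin 4)
  · have h0 : s (0 : Fin 4) := e02.mpr h2s
    have hh1 : s (1 : Fin 4) := e12.mpr h2s
    have h3 : s (3 : Fin 4) := e13.mp hh1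
    obtain ⟨j, hj⟩ := h2
    apply hj
    fin_cases j
    · exact h0
    · exact hh1
    · exact h2s
    · exact h3
  · have h0 : ¬ s (0 : Fin 4) := fun h => h2s (e02.mp h)
    have hh1 : ¬ s (1 : Fin 4) := fun h => h2s (e12.mp h)
    have h3 : ¬ s (3 : Fin 4) := fun h => hh1 (e13.mpr h)
    obtain ⟨i, hi⟩ := h1
    revert hi
    fin_cases i
    · exact h0
    · exact hh1
    · exact h2s
    · exact h3

lemma sp_nfree {R : FPoset} (h : SP R) : ¬ InducedSub Nposet R := by
  induction h with
  | empty P h =>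
    rintro ⟨f, -, -⟩
    have := (f ⟨0, by decide⟩).2
    omega
  | single P h =>
    rintro ⟨f, hinj, -⟩
    have h01 : f ⟨0, by decide⟩ = f ⟨1, by decide⟩ := by
      apply Fin.ext
      have a := (f ⟨0, by decide⟩).2
      have b := (f ⟨1, by decide⟩).2
      omega
    have := hinj h01
    exact absurd this (by decide)
  | ser P Q R _ _ hser ihP ihQ =>
    rintro ⟨e, hinj, hiff⟩
    obtain ⟨f, g, hf, hg, hcov, hfg, hlt⟩ := hser
    by_cases hall : ∀ i, ∃ a, f a = e i
    · choose e' he' using hall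
      refine ihP ⟨e', fun i j hij => hinj (by rw [← he', ← he', hij]), fun i j => ?_⟩
      rw [hiff i j, hlt]
      constructor
      · intro h
        rcases h with ⟨a, b, ha, hb, hab⟩ | ⟨a, b, ha, hb, _⟩ | ⟨a, b, ha, hb⟩
        · have ha' : a = e' i := hf (ha.trans (he' i).symm)
          have hb' : b = e' j := hf (hb.trans (he' j).symm)
          rwa [ha', hb'] at hab
        · exact absurd (ha.trans (he' i).symm).symm (hfg _ _)
        · exact absurd (hb.trans (he' j).symm).symm (hfg _ _)
      · intro h
        exact Or.inl ⟨e' i, e' j, he' i, he' j, h⟩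
    · push_neg at hall
      obtain ⟨i0, hi0⟩ := hall
      have hi0g : ∃ b, g b = e i0 := (hcov (e i0)).resolve_left (fun ⟨a, ha⟩ => hi0 a ha)
      by_cases hallg : ∀ i, ∃ b, g b = e i
      · choose e' he' using hallg
        refine ihQ ⟨e', fun i j hij => hinj (by rw [← he', ← he', hij]), fun i j => ?_⟩
        rw [hiff i j, hlt]
        constructor
        · intro h
          rcases h with ⟨a, b, ha, hb, _⟩ | ⟨a, b, ha, hb, hab⟩ | ⟨a, b, ha, hb⟩
          · exact absurd (ha.trans (he' i).symm) (hfg _ _)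
          · have ha' : a = e' i := hg (ha.trans (he' i).symm)
            have hb' : b = e' j := hg (hb.trans (he' j).symm)
            rwa [ha', hb'] at hab
          · exact absurd (ha.trans (he' i).symm) (hfg _ _)
        · intro h
          exact Or.inr (Or.inl ⟨e' i, e' j, he' i, he' j, h⟩)
      · push_neg at hallg
        obtain ⟨j0, hj0⟩ := hallg
        refine N_no_split (fun i => ∃ b, g b = e i) ⟨i0, hi0g⟩ ⟨j0, fun ⟨b, hb⟩ => hj0 b hb⟩ ?_
        intro i j hi hj
        obtain ⟨a, ha⟩ := (hcov (e i)).resolve_right hi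
        obtain ⟨b, hb⟩ := hj
        rw [hiff i j, hlt]
        exact Or.inr (Or.inr ⟨a, b, ha, hb⟩)
  | par P Q R _ _ hpar ihP ihQ =>
    rintro ⟨e, hinj, hiff⟩
    obtain ⟨f, g, hf, hg, hcov, hfg, hlt⟩ := hpar
    by_cases hall : ∀ i, ∃ a, f a = e i
    · choose e' he' using hall
      refine ihP ⟨e', fun i j hij => hinj (by rw [← he', ← he', hij]), fun i j => ?_⟩
      rw [hiff i j, hlt]
      constructor
      · intro h
        rcases h with ⟨a, b, ha, hb, hab⟩ | ⟨a, b, ha, hb, _⟩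
        · have ha' : a = e' i := hf (ha.trans (he' i).symm)
          have hb' : b = e' j := hf (hb.trans (he' j).symm)
          rwa [ha', hb'] at hab
        · exact absurd (ha.trans (he' i).symm).symm (hfg _ _)
      · intro h
        exact Or.inl ⟨e' i, e' j, he' i, he' j, h⟩
    · push_neg at hall
      obtain ⟨i0, hi0⟩ := hall
      have hi0g : ∃ b, g b = e i0 := (hcov (e i0)).resolve_left (fun ⟨a, ha⟩ => hi0 a ha)
      by_cases hallg : ∀ i, ∃ b, g b = e i
      · choose e' he' using hallg
        refine ihQ ⟨e', fun i j hij => hinj (by rw [← he', ← he', hij]), fun i j => ?_⟩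
        rw [hiff i j, hlt]
        constructor
        · intro h
          rcases h with ⟨a, b, ha, hb, _⟩ | ⟨a, b, ha, hb, hab⟩
          · exact absurd (ha.trans (he' i).symm) (hfg _ _)
          · have ha' : a = e' i := hg (ha.trans (he' i).symm)
            have hb' : b = e' j := hg (hb.trans (he' j).symm)
            rwa [ha', hb'] at hab
        · intro h
          exact Or.inr ⟨e' i, e' j, he' i, he' j, h⟩
      · push_neg at hallg
        obtain ⟨j0, hj0⟩ := hallg
        refine N_connected (fun i => ∃ b, g b = e i) ⟨i0, hi0g⟩ ⟨j0, fun ⟨b, hb⟩ => hj0 b hb⟩ ?_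
        intro i j hi hj
        obtain ⟨a, ha⟩ := (hcov (e j)).resolve_right (fun ⟨b, hb⟩ => hj ⟨b, hb⟩)
        obtain ⟨b, hb⟩ := hi
        constructor
        · intro hltij
          rw [hiff i j, hlt] at hltij
          rcases hltij with ⟨a', b', ha', hb', _⟩ | ⟨a', b', ha', hb', _⟩
          · exact hfg a' b (ha'.trans hb.symm)
          · exact hfg a b' (ha.trans hb'.symm)
        · intro hltji
          rw [hiff j i, hlt] at hltji
          rcases hltji with ⟨a', b', ha', hb', _⟩ | ⟨a', b', ha', hb', _⟩
          · exact hfg b' b (hb'.trans hb.symm)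
          · exact hfg a a' (ha.trans ha'.symm)

lemma series_split (P : FPoset) (hN : ¬ InducedSub Nposet P) :
    ∀ (k : ℕ) (S : Finset (Fin P.n)), S.card ≤ k →
      (∀ x ∈ S, ∀ y ∈ S, P.ConnIn S x y) → 2 ≤ S.card →
      ∃ T : Finset (Fin P.n), T ⊆ S ∧ T.Nonempty ∧ (S \ T).Nonempty ∧
        ∀ x ∈ S \ T, ∀ t ∈ T, P.lt x t := by
  intro k
  induction k with
  | zero => intro S h1 _ h2; omega
  | succ k IH =>
    intro S hSk hconn hS2
    obtain ⟨z, hzS, hzmax⟩ := P.exists_maximal S (card_pos.mp (show 0 < S.card by omega))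
    by_cases hA : ∀ y ∈ S, y ≠ z → P.lt y z
    · refine ⟨{z}, by simp [hzS], ⟨z, mem_singleton_self z⟩, ?_, ?_⟩
      · obtain ⟨y, hyS, hyz⟩ := exists_mem_ne (show 1 < S.card by omega) z
        exact ⟨y, mem_sdiff.2 ⟨hyS, by simp [hyz]⟩⟩
      · intro x hx t ht
        rw [mem_singleton] at ht; subst ht
        rw [mem_sdiff, mem_singleton] at hx
        exact hA x hx.1 hx.2
    · push_neg at hA
      obtain ⟨i, hiS, hiz, hilz⟩ := hA
      set S' := S.erase z with hS'def
      have hS'sub : S' ⊆ S := erase_subset z S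
      have hiS' : i ∈ S' := mem_erase.2 ⟨hiz, hiS⟩
      set D := S'.filter (fun d => P.lt d z) with hDdef
      -- reach: from any u ∈ S', we can reach some element of D inside S'
      have reach : ∀ u, P.ConnIn S u z → u ∈ S' → ∃ d ∈ D, P.ConnIn S' u d := by
        intro u hpath
        induction hpath using Relation.ReflTransGen.head_induction_on with
        | refl => intro hzS'; exact absurd rfl (mem_erase.1 hzS').1
        | @head u' w hstep htail ih =>
          intro huS'
          by_cases hwz : w = z
          · subst hwz
            rcases hstep.2.2 with hlt | hlt
            · exact ⟨u', mem_filter.2 ⟨huS', hlt⟩, Relation.ReflTransGen.refl⟩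
            · exact absurd hlt (hzmax u' hstep.1)
          · have hwS' : w ∈ S' := mem_erase.2 ⟨hwz, hstep.2.1⟩
            obtain ⟨d, hd, hc⟩ := ih hwS'
            exact ⟨d, hd, Relation.ReflTransGen.head ⟨huS', hwS', hstep.2.2⟩ hc⟩
      have hDne : D.Nonempty := by
        obtain ⟨d, hd, -⟩ := reach i (hconn i hiS z hzS) hiS'
        exact ⟨d, hd⟩
      -- S' is connected
      have hconn' : ∀ u ∈ S', ∀ v ∈ S', P.ConnIn S' u v := by
        by_contra hcon; push_neg at hcon
        obtain ⟨u, huS', v, hvS', huv⟩ := hcon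
        obtain ⟨du, hduD, hudu⟩ := reach u (hconn u (hS'sub huS') z hzS) huS'
        obtain ⟨dv, hdvD, hvdv⟩ := reach v (hconn v (hS'sub hvS') z hzS) hvS'
        have hdudv : ¬ P.ConnIn S' du dv := fun h =>
          huv (hudu.trans (h.trans (connIn_symm hvdv)))
        obtain ⟨d1, hd1D, hd1i⟩ : ∃ d1 ∈ D, ¬ P.ConnIn S' d1 i := by
          by_cases hdui : P.ConnIn S' du i
          · exact ⟨dv, hdvD, fun hdvi => hdudv (hdui.trans (connIn_symm hdvi))⟩
          · exact ⟨du, hduD, hdui⟩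
        have hd1S' : d1 ∈ S' := (mem_filter.1 hd1D).1
        have hd1z : P.lt d1 z := (mem_filter.1 hd1D).2
        have keyc : ∀ d2 ∈ D, ¬ P.ConnIn S' d1 d2 → ∀ y ∈ S', P.lt d2 y → P.lt y z := by
          intro d2 hd2D hnc y hyS' hd2y
          by_contra hyz
          have hd2S' : d2 ∈ S' := (mem_filter.1 hd2D).1
          have hd2z : P.lt d2 z := (mem_filter.1 hd2D).2
          have hzy : ¬ P.lt z y := hzmax y (hS'sub hyS')
          have hd1d2 : ¬ P.lt d1 d2 := fun h =>
            hnc (Relation.ReflTransGen.single ⟨hd1S', hd2S', Or.inl h⟩)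
          have hd2d1 : ¬ P.lt d2 d1 := fun h =>
            hnc (Relation.ReflTransGen.single ⟨hd1S', hd2S', Or.inr h⟩)
          have hncy : ¬ P.ConnIn S' d1 y := fun h =>
            hnc (h.trans (Relation.ReflTransGen.single ⟨hyS', hd2S', Or.inr hd2y⟩))
          have hd1y : ¬ P.lt d1 y := fun h =>
            hncy (Relation.ReflTransGen.single ⟨hd1S', hyS', Or.inl h⟩)
          have hyd1 : ¬ P.lt y d1 := fun h =>
            hncy (Relation.ReflTransGen.single ⟨hd1S', hyS', Or.inr h⟩)
          exact hN (P.N_of hd1z hd2z hd2y hd1d2 hd2d1 hd1y hyd1 hzy hyz)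
        obtain ⟨di, hdiD, hpath⟩ := reach i (hconn i hiS z hzS) hiS'
        have walk : ∀ y, P.ConnIn S' y di → y ∈ S' → ¬ P.lt y z → ¬ P.ConnIn S' d1 y → False := by
          intro y hp
          induction hp using Relation.ReflTransGen.head_induction_on with
          | refl => intro _ hdz _; exact hdz (mem_filter.1 hdiD).2
          | @head y' w hstep htail ih =>
            intro hyS' hyz h1y
            have hwS' : w ∈ S' := hstep.2.1
            have h1w : ¬ P.ConnIn S' d1 w := fun h =>
              h1y (h.trans (Relation.ReflTransGen.single
                ⟨hwS', hyS', (hstep.2.2.imp id id).symm⟩))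
            by_cases hwz : P.lt w z
            · rcases hstep.2.2 with hlt | hlt
              · exact hyz (P.lt_trans _ _ _ hlt hwz)
              · exact hyz (keyc w (mem_filter.2 ⟨hwS', hwz⟩) h1w y' hyS' hlt)
            · exact ih hwS' hwz h1w
        exact walk i hpath hiS' hilz hd1i
      -- size facts for S'
      obtain ⟨d0, hd0D⟩ := hDne
      have hd0S' : d0 ∈ S' := (mem_filter.1 hd0D).1
      have hid0 : i ≠ d0 := fun h => hilz (h ▸ (mem_filter.1 hd0D).2)
      have hS'2 : 2 ≤ S'.card := one_lt_card.2 ⟨i, hiS', d0, hd0S', hid0⟩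
      have hS'k : S'.card ≤ k := by
        have h9 : S'.card = S.card - 1 := card_erase_of_mem hzS
        omega
      obtain ⟨T', hT'sub, hT'ne, hB''ne, hsplit'⟩ := IH S' hS'k hconn' hS'2
      by_cases hti : ∃ t ∈ T', P.lt t z
      · obtain ⟨t, htT', htz⟩ := hti
        refine ⟨insert z T', insert_subset hzS (hT'sub.trans hS'sub),
          insert_nonempty _ _, ?_, ?_⟩
        · obtain ⟨x, hx⟩ := hB''ne
          rw [mem_sdiff] at hx
          refine ⟨x, mem_sdiff.2 ⟨hS'sub hx.1, ?_⟩⟩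
          rw [mem_insert]
          push_neg
          exact ⟨(mem_erase.1 hx.1).1, hx.2⟩
        · intro x hx t'' ht''
          rw [mem_sdiff, mem_insert] at hx
          push_neg at hx
          have hxS := hx.1
          have hxz := hx.2.1
          have hxT' := hx.2.2
          have hxB : x ∈ S' \ T' := mem_sdiff.2 ⟨mem_erase.2 ⟨hxz, hxS⟩, hxT'⟩
          rcases mem_insert.1 ht'' with rfl | ht''
          · exact P.lt_trans _ _ _ (hsplit' x hxB t htT') htz
          · exact hsplit' x hxB t'' ht''
      · push_neg at hti
        obtain ⟨t0, ht0T'⟩ := hT'ne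
        have ht0S' : t0 ∈ S' := hT'sub ht0T'
        have hzt0 : ¬ P.lt z t0 := hzmax t0 (hS'sub ht0S')
        have hDB : D ⊆ S' \ T' := fun d hd => mem_sdiff.2
          ⟨(mem_filter.1 hd).1, fun hdT' => hti d hdT' (mem_filter.1 hd).2⟩
        have keyN : ∀ a ∈ S' \ T', ¬ P.lt a z → ∀ d ∈ D, (P.Cmp a d ∨ a = d) := by
          intro a haB haz d hdD
          by_contra hcon
          push_neg at hcon
          have had : ¬ P.lt a d := fun h => hcon.1 (Or.inl h)
          have hda : ¬ P.lt d a := fun h => hcon.1 (Or.inr h)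
          have hza : ¬ P.lt z a := hzmax a (hS'sub (mem_sdiff.1 haB).1)
          have hdz : P.lt d z := (mem_filter.1 hdD).2
          have hat0 : P.lt a t0 := hsplit' a haB t0 ht0T'
          have hdt0 : P.lt d t0 := hsplit' d (hDB hdD) t0 ht0T'
          exact hN (P.N_of hat0 hdt0 hdz had hda haz hza (hti t0 ht0T') hzt0)
        set Q := insert z (S' \ T') with hQdef
        have hQsub : Q ⊆ S := insert_subset hzS (sdiff_subset.trans hS'sub)
        have hQz : ∀ q ∈ Q, P.ConnIn Q q z := by
          intro q hq
          rcases mem_insert.1 hq with rfl | hqB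
          · exact Relation.ReflTransGen.refl
          · by_cases hcq : P.Cmp q z
            · exact Relation.ReflTransGen.single ⟨hq, mem_insert_self z _, hcq⟩
            · have hqz : ¬ P.lt q z := fun h => hcq (Or.inl h)
              rcases keyN q hqB hqz d0 hd0D with hcmp | rfl
              · have hd0Q : d0 ∈ Q := mem_insert_of_mem (hDB hd0D)
                exact Relation.ReflTransGen.head ⟨hq, hd0Q, hcmp⟩
                  (Relation.ReflTransGen.single
                    ⟨hd0Q, mem_insert_self z _, Or.inl (mem_filter.1 hd0D).2⟩)
              · exact absurd (mem_filter.1 hd0D).2 hqz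
        have hQconn : ∀ x ∈ Q, ∀ y ∈ Q, P.ConnIn Q x y :=
          fun x hx y hy => (hQz x hx).trans (connIn_symm (hQz y hy))
        have hzQ : z ∈ Q := mem_insert_self z _
        have hd0Q : d0 ∈ Q := mem_insert_of_mem (hDB hd0D)
        have hzd0 : z ≠ d0 := fun h => P.lt_irrefl z (h ▸ (mem_filter.1 hd0D).2)
        have hQ2 : 2 ≤ Q.card := one_lt_card.2 ⟨z, hzQ, d0, hd0Q, hzd0⟩
        have hQk : Q.card ≤ k := by
          have hQsub' : Q ⊆ S \ T' := by
            refine insert_subset (mem_sdiff.2 ⟨hzS, fun h => (mem_erase.1 (hT'sub h)).1 rfl⟩) ?_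
            exact sdiff_subset_sdiff hS'sub Subset.rfl
          have h1 : Q.card ≤ (S \ T').card := card_le_card hQsub'
          have h2 : (S \ T').card < S.card := card_lt_card
            ⟨sdiff_subset, fun hsub => (mem_sdiff.1 (hsub (hS'sub ht0S'))).2 ht0T'⟩
          omega
        obtain ⟨TQ, hTQsub, hTQne, hQBne, hsplitQ⟩ := IH Q hQk hQconn hQ2
        have hzTQ : z ∈ TQ := by
          by_contra hz
          obtain ⟨tq, htq⟩ := hTQne
          exact hzmax tq (hQsub (hTQsub htq)) (hsplitQ z (mem_sdiff.2 ⟨hzQ, hz⟩) tq htq)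
        refine ⟨TQ ∪ T', union_subset (hTQsub.trans hQsub) (hT'sub.trans hS'sub),
          ⟨z, mem_union_left _ hzTQ⟩, ?_, ?_⟩
        · obtain ⟨x, hx⟩ := hQBne
          rw [mem_sdiff] at hx
          have hxB : x ∈ S' \ T' := by
            rcases mem_insert.1 hx.1 with rfl | hxB
            · exact absurd hzTQ hx.2
            · exact hxB
          refine ⟨x, mem_sdiff.2 ⟨hS'sub (mem_sdiff.1 hxB).1, ?_⟩⟩
          rw [mem_union]
          push_neg
          exact ⟨hx.2, (mem_sdiff.1 hxB).2⟩
        · intro x hx t ht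
          rw [mem_sdiff, mem_union] at hx
          push_neg at hx
          have hxS := hx.1
          have hxTQ := hx.2.1
          have hxT' := hx.2.2
          have hxz : x ≠ z := fun h => hxTQ (h ▸ hzTQ)
          have hxB : x ∈ S' \ T' := mem_sdiff.2 ⟨mem_erase.2 ⟨hxz, hxS⟩, hxT'⟩
          rcases mem_union.1 ht with htTQ | htT'
          · exact hsplitQ x (mem_sdiff.2 ⟨mem_insert_of_mem hxB, hxTQ⟩) t htTQ
          · exact hsplit' x hxB t htT'

lemma sp_of_nfree : ∀ (k : ℕ) (P : FPoset), P.n ≤ k → ¬ InducedSub Nposet P → SP P := by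
  intro k
  induction k with
  | zero => intro P h _; exact SP.empty P (by omega)
  | succ k IH =>
    intro P hk hN
    rcases Nat.lt_or_ge P.n 2 with h2 | h2
    · by_cases h0 : P.n = 0
      · exact SP.empty P h0
      · exact SP.single P (by omega)
    · by_cases hconn : ∀ x y : Fin P.n, P.ConnIn univ x y
      · have hconn' : ∀ x ∈ (univ : Finset (Fin P.n)), ∀ y ∈ univ, P.ConnIn univ x y :=
          fun x _ y _ => hconn x y
        have hcard : (univ : Finset (Fin P.n)).card = P.n := by simp
        obtain ⟨T, -, hTne, hTcne, hsplit⟩ :=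
          P.series_split hN (univ : Finset (Fin P.n)).card univ le_rfl hconn' (by omega)
        have hsplit' : ∀ x ∉ T, ∀ t ∈ T, P.lt x t :=
          fun x hx t ht => hsplit x (mem_sdiff.2 ⟨mem_univ x, hx⟩) t ht
        have hTcard : T.card < P.n := by
          have : T ⊂ univ := ⟨subset_univ T, fun hsub => by
            obtain ⟨y, hy⟩ := hTcne
            exact (mem_sdiff.1 hy).2 (hsub (mem_univ y))⟩
          have := card_lt_card this
          omega
        have hTccard : Tᶜ.card < P.n := by
          have h1 : Tᶜ.card = P.n - T.card := by
            rw [card_compl]; simp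
          obtain ⟨t, ht⟩ := hTne
          have : 1 ≤ T.card := card_pos.2 ⟨t, ht⟩
          omega
        refine SP.ser (P.restrict Tᶜ) (P.restrict T) P ?_ ?_ (P.isSer_restrict T hsplit')
        · exact IH (P.restrict Tᶜ) (by show Finset.card _ ≤ k; omega) (nfree_restrict hN Tᶜ)
        · exact IH (P.restrict T) (by show Finset.card _ ≤ k; omega) (nfree_restrict hN T)
      · push_neg at hconn
        obtain ⟨x, y, hxy⟩ := hconn
        set S := univ.filter (P.ConnIn univ x) with hSdef
        have hxS : x ∈ S := mem_filter.2 ⟨mem_univ x, Relation.ReflTransGen.refl⟩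
        have hyS : y ∉ S := fun h => hxy (mem_filter.1 h).2
        have hcross : ∀ a ∈ S, ∀ b ∉ S, ¬ P.Cmp a b := fun a ha b hb hc =>
          hb (mem_filter.2 ⟨mem_univ b,
            ((mem_filter.1 ha).2).tail ⟨mem_univ a, mem_univ b, hc⟩⟩)
        have hScard : S.card < P.n := by
          have : S ⊂ univ := ⟨subset_univ S, fun hsub => hyS (hsub (mem_univ y))⟩
          have := card_lt_card this
          simpa using this
        have hSccard : Sᶜ.card < P.n := by
          have h1 : Sᶜ.card = P.n - S.card := by rw [card_compl]; simp
          have : 1 ≤ S.card := card_pos.2 ⟨x, hxS⟩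
          omega
        refine SP.par (P.restrict S) (P.restrict Sᶜ) P ?_ ?_
          (P.isPar_restrict S hcross)
        · exact IH (P.restrict S) (by show S.card ≤ k; omega) (nfree_restrict hN S)
        · exact IH (P.restrict Sᶜ) (by show Sᶜ.card ≤ k; omega) (nfree_restrict hN Sᶜ)

end FPoset



open FPoset in
/-- A finite poset is series-parallel iff it does not contain `N` as an
induced subposet. -/
theorem sp_iff_N_free (P : FPoset) : SP P ↔ ¬ InducedSub Nposet P := by
  exact ⟨sp_nfree, fun h => sp_of_nfree P.n P le_rfl h⟩
end

section
/- The gluing composition of iposets is well defined: if (s₁,P₁,t₁):n₁→m and (s₂,P₂,t₂):m→m₂ are iposets, then the quotient of P₁⊔P₂ identifying t₁(k) with s₂(k) for k∈[m], with order (p,i)<(q,j) iff (i=j and p<ᵢq) or (i<j and p∉t₁([m]) and q∉s₂([m])), is a partial order (irreflexive and transitive), and (s₁, P₁*P₂, t₂) is an iposet of type n₁→m₂. -/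
namespace GlueC
open Iposet
variable (P Q : Iposet)

noncomputable def eQ : {b : Fin Q.n // ¬ ∃ i, Q.s i = b} ≃ Fin (Q.n - Q.k) := by
  apply Fintype.equivFinOfCardEq
  have h1 : Fintype.card {b : Fin Q.n // ∃ i, Q.s i = b} = Q.k := by
    have : Fintype.card {b : Fin Q.n // ∃ i, Q.s i = b} = Fintype.card (Set.range Q.s) :=
      Fintype.card_congr (Equiv.subtypeEquivRight (by simp [Set.mem_range]))
    rw [this, Set.card_range_of_injective Q.s_inj, Fintype.card_fin]
  classical
  rw [Fintype.card_subtype_compl, h1, Fintype.card_fin]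

def fmap : Fin P.n → Fin (P.n + (Q.n - Q.k)) := Fin.castAdd _

lemma fmap_inj : Function.Injective (fmap P Q) := fun a b hab =>
  Fin.ext (by simpa [fmap, Fin.ext_iff] using hab)

variable (h : P.m = Q.k)

noncomputable def gmap (b : Fin Q.n) : Fin (P.n + (Q.n - Q.k)) :=
  if hb : ∃ i, Q.s i = b then fmap P Q (P.t (Fin.cast h.symm hb.choose))
  else Fin.natAdd P.n (eQ Q ⟨b, hb⟩)

lemma gmap_s (i : Fin Q.k) : gmap P Q h (Q.s i) = fmap P Q (P.t (Fin.cast h.symm i)) := by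
  have hb : ∃ j, Q.s j = Q.s i := ⟨i, rfl⟩
  rw [gmap, dif_pos hb]
  have : hb.choose = i := Q.s_inj hb.choose_spec
  rw [this]

lemma gmap_not (b : Fin Q.n) (hb : ¬ ∃ i, Q.s i = b) :
    gmap P Q h b = Fin.natAdd P.n (eQ Q ⟨b, hb⟩) := by
  rw [gmap, dif_neg hb]

lemma fmap_ne_natAdd (a : Fin P.n) (c : Fin (Q.n - Q.k)) :
    fmap P Q a ≠ Fin.natAdd P.n c := by
  intro hc
  have h1 : (a : ℕ) = P.n + c := congrArg Fin.val hc
  have := a.isLt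
  omega

lemma fg_lemma (a : Fin P.n) (b : Fin Q.n) (heq : fmap P Q a = gmap P Q h b) :
    ∃ i, Q.s i = b ∧ a = P.t (Fin.cast h.symm i) := by
  by_cases hb : ∃ i, Q.s i = b
  · obtain ⟨i, rfl⟩ := hb
    rw [gmap_s] at heq
    exact ⟨i, rfl, fmap_inj P Q heq⟩
  · rw [gmap_not P Q h b hb] at heq
    exact absurd heq (fmap_ne_natAdd P Q _ _)

lemma gmap_inj : Function.Injective (gmap P Q h) := by
  intro b b' heq
  by_cases hb : ∃ i, Q.s i = b <;> by_cases hb' : ∃ i, Q.s i = b'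
  · obtain ⟨i, rfl⟩ := hb; obtain ⟨i', rfl⟩ := hb'
    rw [gmap_s, gmap_s] at heq
    have h2 := P.t_inj (fmap_inj P Q heq)
    simp only [Fin.ext_iff, Fin.coe_cast] at h2
    rw [Fin.ext h2]
  · obtain ⟨i, rfl⟩ := hb
    rw [gmap_s, gmap_not P Q h b' hb'] at heq
    exact absurd heq (fmap_ne_natAdd P Q _ _)
  · obtain ⟨i', rfl⟩ := hb'
    rw [gmap_s, gmap_not P Q h b hb] at heq
    exact absurd heq.symm (fmap_ne_natAdd P Q _ _)
  · rw [gmap_not P Q h b hb, gmap_not P Q h b' hb'] at heq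
    have : (eQ Q ⟨b, hb⟩) = (eQ Q ⟨b', hb'⟩) := by
      have := congrArg Fin.val heq
      simp only [Fin.coe_natAdd] at this
      exact Fin.ext (by omega)
    have := (eQ Q).injective this
    exact congrArg Subtype.val this

lemma cover (x : Fin (P.n + (Q.n - Q.k))) :
    (∃ a, fmap P Q a = x) ∨ (∃ b, gmap P Q h b = x) := by
  by_cases hx : (x : ℕ) < P.n
  · exact Or.inl ⟨⟨x, hx⟩, Fin.ext rfl⟩
  · right
    have hxlt := x.isLt
    refine ⟨((eQ Q).symm ⟨x - P.n, by omega⟩ : {b : Fin Q.n // ¬ ∃ i, Q.s i = b}).1, ?_⟩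
    set b := (eQ Q).symm ⟨x - P.n, by omega⟩ with hbdef
    rw [gmap_not P Q h b.1 b.2]
    have : (⟨b.1, b.2⟩ : {b : Fin Q.n // ¬ ∃ i, Q.s i = b}) = b := rfl
    rw [this, hbdef, Equiv.apply_symm_apply]
    exact Fin.ext (by simp [Fin.coe_natAdd]; omega)

def Rlt (x y : Fin (P.n + (Q.n - Q.k))) : Prop :=
  (∃ a b, fmap P Q a = x ∧ fmap P Q b = y ∧ P.lt a b) ∨
  (∃ a b, gmap P Q h a = x ∧ gmap P Q h b = y ∧ Q.lt a b) ∨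
  (∃ a b, fmap P Q a = x ∧ gmap P Q h b = y ∧ (∀ i, a ≠ P.t i) ∧ (∀ j, b ≠ Q.s j))

lemma Rlt_irrefl (x : Fin (P.n + (Q.n - Q.k))) : ¬ Rlt P Q h x x := by
  rintro (⟨a, b, ha, hb, hlt⟩ | ⟨a, b, ha, hb, hlt⟩ | ⟨a, b, ha, hb, hna, hnb⟩)
  · have hab := fmap_inj P Q (ha.trans hb.symm); subst hab; exact P.lt_irrefl a hlt
  · have hab := gmap_inj P Q h (ha.trans hb.symm); subst hab; exact Q.lt_irrefl a hlt
  · obtain ⟨i, hi, -⟩ := fg_lemma P Q h a b (ha.trans hb.symm)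
    exact hnb i hi.symm

lemma Rlt_trans (x y z : Fin (P.n + (Q.n - Q.k))) :
    Rlt P Q h x y → Rlt P Q h y z → Rlt P Q h x z := by
  rintro (⟨a, b, ha, hb, hlt⟩ | ⟨a, b, ha, hb, hlt⟩ | ⟨a, b, ha, hb, hna, hnb⟩) <;>
    rintro (⟨a', b', ha', hb', hlt'⟩ | ⟨a', b', ha', hb', hlt'⟩ | ⟨a', b', ha', hb', hna', hnb'⟩)
  -- F F
  · exact Or.inl ⟨a, b', ha, hb', P.lt_trans _ _ _ hlt (by rwa [fmap_inj P Q (ha'.trans hb.symm)] at hlt')⟩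
  -- F G
  · obtain ⟨i, hi, hbt⟩ := fg_lemma P Q h b a' (hb.trans ha'.symm)
    refine Or.inr (Or.inr ⟨a, b', ha, hb', ?_, ?_⟩)
    · intro j hj; exact P.t_max j b (hj ▸ hlt)
    · intro j hj; exact Q.s_min j a' (hj ▸ hlt')
  -- F M
  · have : b = a' := fmap_inj P Q (hb.trans ha'.symm)
    refine Or.inr (Or.inr ⟨a, b', ha, hb', ?_, hnb'⟩)
    intro j hj; exact P.t_max j b (hj ▸ hlt)
  -- G F
  · obtain ⟨i, hi, hat⟩ := fg_lemma P Q h a' b (ha'.trans hb.symm)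
    exact absurd hlt' (hat ▸ P.t_max _ _)
  -- G G
  · exact Or.inr (Or.inl ⟨a, b', ha, hb', Q.lt_trans _ _ _ hlt (by rwa [gmap_inj P Q h (ha'.trans hb.symm)] at hlt')⟩)
  -- G M
  · obtain ⟨i, hi, hat⟩ := fg_lemma P Q h a' b (ha'.trans hb.symm)
    exact absurd hat (hna' _)
  -- M F
  · obtain ⟨i, hi, hat⟩ := fg_lemma P Q h a' b (ha'.trans hb.symm)
    exact absurd hi.symm (hnb i)
  -- M G
  · have : b = a' := gmap_inj P Q h (hb.trans ha'.symm)
    refine Or.inr (Or.inr ⟨a, b', ha, hb', hna, ?_⟩)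
    intro j hj; exact Q.s_min j a' (hj ▸ hlt')
  -- M M
  · obtain ⟨i, hi, hat⟩ := fg_lemma P Q h a' b (ha'.trans hb.symm)
    exact absurd hat (hna' _)

noncomputable def R : Iposet where
  n := P.n + (Q.n - Q.k)
  lt := Rlt P Q h
  lt_irrefl := Rlt_irrefl P Q h
  lt_trans := Rlt_trans P Q h
  k := P.k
  m := Q.m
  s := fun i => fmap P Q (P.s i)
  t := fun i => gmap P Q h (Q.t i)
  s_inj := fun i j hij => P.s_inj (fmap_inj P Q hij)
  t_inj := fun i j hij => Q.t_inj (gmap_inj P Q h hij)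
  s_min := by
    rintro i x (⟨a, b, ha, hb, hlt⟩ | ⟨a, b, ha, hb, hlt⟩ | ⟨a, b, ha, hb, hna, hnb⟩)
    · exact P.s_min i a (by rwa [fmap_inj P Q hb] at hlt)
    · obtain ⟨j, hj, -⟩ := fg_lemma P Q h (P.s i) b hb.symm
      exact Q.s_min j a (hj ▸ hlt)
    · obtain ⟨j, hj, -⟩ := fg_lemma P Q h (P.s i) b hb.symm
      exact hnb j hj.symm
  t_max := by
    rintro i x (⟨a, b, ha, hb, hlt⟩ | ⟨a, b, ha, hb, hlt⟩ | ⟨a, b, ha, hb, hna, hnb⟩)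
    · obtain ⟨j, hj, hat⟩ := fg_lemma P Q h a (Q.t i) ha
      exact P.t_max _ b (hat ▸ hlt)
    · exact Q.t_max i b (by rwa [gmap_inj P Q h ha] at hlt)
    · obtain ⟨j, hj, hat⟩ := fg_lemma P Q h a (Q.t i) ha
      exact hna _ hat

end GlueC

open Iposet in
/-- The gluing composition of iposets is well defined: for iposets
`P : n₁ → m` and `Q : m → m₂` there exists an iposet `R` (in particular, the
glued order is irreflexive and transitive and the interface maps are
injective into minimal resp. maximal elements) which is the gluing `P * Q`;
it has type `n₁ → m₂` and `P.n + Q.n - m` points. -/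
theorem gluing_well_defined (P Q : Iposet) (h : P.m = Q.k) :
    ∃ R : Iposet, IsGluing P Q R ∧ R.k = P.k ∧ R.m = Q.m ∧
      R.n + P.m = P.n + Q.n := by
  refine ⟨GlueC.R P Q h, ⟨⟨h, rfl, rfl, GlueC.fmap P Q, GlueC.gmap P Q h,
    GlueC.fmap_inj P Q, GlueC.gmap_inj P Q h, GlueC.cover P Q h, ?_, ?_,
    fun x y => Iff.rfl, fun i => rfl, fun i => rfl⟩⟩, rfl, rfl, ?_⟩
  · intro i
    exact (GlueC.gmap_s P Q h (Fin.cast h i)).symm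
  · intro a b heq
    obtain ⟨i, hi, hat⟩ := GlueC.fg_lemma P Q h a b heq
    exact ⟨Fin.cast h.symm i, hat⟩
  · have hk : Q.k ≤ Q.n := by
      simpa using Fintype.card_le_of_injective Q.s Q.s_inj
    show P.n + (Q.n - Q.k) + P.m = P.n + Q.n
    omega
end

section
/- Gluing and parallel compositions of interface-consistent iposets are interface consistent; consequently every gluing-parallel iposet is interface consistent. -/
namespace IposetAux

open Iposet

lemma glue_ic (P Q R : Iposet) (hP : InterfaceConsistent P) (hQ : InterfaceConsistent Q)
    (h : IsGluing P Q R) : InterfaceConsistent R := by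
  obtain ⟨d⟩ := h
  intro i j i' j' hij hij'
  rw [d.s_eq, d.t_eq] at hij hij'
  obtain ⟨l, hl⟩ := d.overlap _ _ hij
  obtain ⟨l', hl'⟩ := d.overlap _ _ hij'
  have hb : Q.t (Fin.cast d.hm i') = Q.s (Fin.cast d.hg l) := by
    apply d.g_inj
    rw [← d.agree, ← hl, hij]
  have hb' : Q.t (Fin.cast d.hm j') = Q.s (Fin.cast d.hg l') := by
    apply d.g_inj
    rw [← d.agree, ← hl', hij']
  have h1 := hP (Fin.cast d.hk i) (Fin.cast d.hk j) l l' hl hl'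
  have h2 := hQ (Fin.cast d.hg l) (Fin.cast d.hg l') (Fin.cast d.hm i') (Fin.cast d.hm j')
    hb.symm hb'.symm
  simp only [Fin.coe_cast] at h1 h2
  omega

lemma s_cases {P Q R : Iposet} (d : ParData P Q R) (i : Fin R.k) :
    (∃ i₀ : Fin P.k, (i : ℕ) = (i₀ : ℕ) ∧ R.s i = d.f (P.s i₀)) ∨
    (∃ i₀ : Fin Q.k, (i : ℕ) = P.k + (i₀ : ℕ) ∧ R.s i = d.g (Q.s i₀)) := by
  have hi : (i : ℕ) < P.k + Q.k := by have := i.isLt; have := d.hk; omega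
  by_cases h : (i : ℕ) < P.k
  · refine Or.inl ⟨⟨i, h⟩, rfl, ?_⟩
    rw [← d.s_eq₁ ⟨i, h⟩]
    congr 1
  · refine Or.inr ⟨⟨(i : ℕ) - P.k, by omega⟩, by show (i : ℕ) = P.k + ((i : ℕ) - P.k); omega, ?_⟩
    rw [← d.s_eq₂ ⟨(i : ℕ) - P.k, by omega⟩]
    congr 1
    apply Fin.ext
    simp only [Fin.coe_cast, Fin.coe_natAdd]
    omega

lemma t_cases {P Q R : Iposet} (d : ParData P Q R) (i : Fin R.m) :
    (∃ i₀ : Fin P.m, (i : ℕ) = (i₀ : ℕ) ∧ R.t i = d.f (P.t i₀)) ∨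
    (∃ i₀ : Fin Q.m, (i : ℕ) = P.m + (i₀ : ℕ) ∧ R.t i = d.g (Q.t i₀)) := by
  have hi : (i : ℕ) < P.m + Q.m := by have := i.isLt; have := d.hm; omega
  by_cases h : (i : ℕ) < P.m
  · refine Or.inl ⟨⟨i, h⟩, rfl, ?_⟩
    rw [← d.t_eq₁ ⟨i, h⟩]
    congr 1
  · refine Or.inr ⟨⟨(i : ℕ) - P.m, by omega⟩, by show (i : ℕ) = P.m + ((i : ℕ) - P.m); omega, ?_⟩
    rw [← d.t_eq₂ ⟨(i : ℕ) - P.m, by omega⟩]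
    congr 1
    apply Fin.ext
    simp only [Fin.coe_cast, Fin.coe_natAdd]
    omega

lemma par_ic (P Q R : Iposet) (hP : InterfaceConsistent P) (hQ : InterfaceConsistent Q)
    (h : IsPar P Q R) : InterfaceConsistent R := by
  obtain ⟨d⟩ := h
  intro i j i' j' hij hij'
  rcases s_cases d i with ⟨i₀, hiv, his⟩ | ⟨i₀, hiv, his⟩ <;>
  rcases t_cases d i' with ⟨i₀', hiv', hit⟩ | ⟨i₀', hiv', hit⟩ <;>
  rcases s_cases d j with ⟨j₀, hjv, hjs⟩ | ⟨j₀, hjv, hjs⟩ <;>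
  rcases t_cases d j' with ⟨j₀', hjv', hjt⟩ | ⟨j₀', hjv', hjt⟩ <;>
  rw [his, hit] at hij <;> rw [hjs, hjt] at hij' <;>
  first
  | exact absurd hij (d.disjoint _ _)
  | exact absurd hij.symm (d.disjoint _ _)
  | exact absurd hij' (d.disjoint _ _)
  | exact absurd hij'.symm (d.disjoint _ _)
  | · have b1 := i₀.isLt
      have b2 := j₀.isLt
      have b3 := i₀'.isLt
      have b4 := j₀'.isLt
      first
      | have h1 := hP _ _ _ _ (d.f_inj hij) (d.f_inj hij'); omega
      | have h1 := hQ _ _ _ _ (d.g_inj hij) (d.g_inj hij'); omega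
      | omega

lemma gp_ic : ∀ P : Iposet, GP P → InterfaceConsistent P := by
  intro P h
  induction h with
  | empty P h =>
    intro i j i' j' _ _
    exact Fin.elim0 (Fin.cast h (P.s i))
  | single P h =>
    intro i j i' j' _ _
    have key : ∀ a b : Fin P.n, a = b := fun a b =>
      Fin.ext (by have := a.isLt; have := b.isLt; omega)
    have hij : i = j := P.s_inj (key _ _)
    have hij' : i' = j' := P.t_inj (key _ _)
    subst hij; subst hij'
    simp
  | glue P Q R _ _ hg ihP ihQ => exact glue_ic P Q R ihP ihQ hg
  | par P Q R _ _ hg ihP ihQ => exact par_ic P Q R ihP ihQ hg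

end IposetAux

open Iposet in
/-- Gluing and parallel compositions of interface-consistent iposets are
interface consistent; consequently every gluing-parallel iposet is
interface consistent. -/
theorem gp_interface_consistent :
    (∀ P Q R : Iposet, InterfaceConsistent P → InterfaceConsistent Q →
        IsGluing P Q R → InterfaceConsistent R) ∧
    (∀ P Q R : Iposet, InterfaceConsistent P → InterfaceConsistent Q →
        IsPar P Q R → InterfaceConsistent R) ∧
    (∀ P : Iposet, GP P → InterfaceConsistent P) := by
  exact ⟨IposetAux.glue_ic, IposetAux.par_ic, IposetAux.gp_ic⟩
end

section
/- A gluing composition P = P₁*P₂ of iposets is trivial (i.e., the underlying poset of P equals that of P₁ or of P₂) if and only if P₁ is a starter or P₂ is a terminator. -/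
open Iposet

lemma aux_t_surj_discrete (P : Iposet) (h : Function.Surjective P.t) : Discrete P := by
  intro x y hxy
  obtain ⟨i, rfl⟩ := h x
  exact P.t_max i y hxy

lemma aux_s_surj_discrete (P : Iposet) (h : Function.Surjective P.s) : Discrete P := by
  intro x y hxy
  obtain ⟨i, rfl⟩ := h y
  exact P.s_min i x hxy

lemma aux_card_eq {P Q R : Iposet} (d : GluingData P Q R) :
    R.n + P.m = P.n + Q.n := by
  classical
  have hU : (Finset.univ.image d.f ∪ Finset.univ.image d.g) = Finset.univ := by
    apply Finset.eq_univ_iff_forall.2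
    intro x
    rcases d.cover x with ⟨a, ha⟩ | ⟨b, hb⟩
    · exact Finset.mem_union_left _ (Finset.mem_image.2 ⟨a, Finset.mem_univ _, ha⟩)
    · exact Finset.mem_union_right _ (Finset.mem_image.2 ⟨b, Finset.mem_univ _, hb⟩)
  have hI : (Finset.univ.image d.f ∩ Finset.univ.image d.g)
      = Finset.univ.image (fun i => d.f (P.t i)) := by
    ext x
    simp only [Finset.mem_inter, Finset.mem_image, Finset.mem_univ, true_and]
    constructor
    · rintro ⟨⟨a, rfl⟩, ⟨b, hb⟩⟩
      obtain ⟨i, rfl⟩ := d.overlap a b hb.symm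
      exact ⟨i, rfl⟩
    · rintro ⟨i, rfl⟩
      exact ⟨⟨P.t i, rfl⟩, ⟨Q.s (Fin.cast d.hg i), (d.agree i).symm⟩⟩
  have key := Finset.card_union_add_card_inter (Finset.univ.image d.f) (Finset.univ.image d.g)
  rw [hU, hI] at key
  have h1 : (Finset.univ.image d.f).card = P.n := by
    rw [Finset.card_image_of_injective _ d.f_inj, Finset.card_univ, Fintype.card_fin]
  have h2 : (Finset.univ.image d.g).card = Q.n := by
    rw [Finset.card_image_of_injective _ d.g_inj, Finset.card_univ, Fintype.card_fin]
  have h3 : (Finset.univ.image (fun i => d.f (P.t i))).card = P.m := by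
    have hinj : Function.Injective (fun i => d.f (P.t i)) := fun a b h => P.t_inj (d.f_inj h)
    rw [Finset.card_image_of_injective _ hinj, Finset.card_univ, Fintype.card_fin]
  rw [h1, h2, h3, Finset.card_univ, Fintype.card_fin] at key
  exact key

/-- A gluing composition `R = P * Q` is trivial (its underlying poset is
that of `P` or that of `Q`) if and only if `P` is a starter or `Q` is a
terminator. -/
theorem gluing_trivial_iff (P Q R : Iposet) (h : IsGluing P Q R) :
    (PosetIso R P ∨ PosetIso R Q) ↔ (Starter P ∨ Terminator Q) := by
  obtain ⟨d⟩ := h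
  constructor
  · rintro (⟨e, _⟩ | ⟨e, _⟩)
    · -- R ≅ P, so Q is a terminator
      have hn : R.n = P.n := by
        have := Fintype.card_congr e
        simpa using this
      have hQ : Q.k = Q.n := by
        have := aux_card_eq d
        have := d.hg
        omega
      have hbij : Function.Bijective Q.s := by
        rw [Fintype.bijective_iff_injective_and_card]
        exact ⟨Q.s_inj, by simpa using hQ⟩
      exact Or.inr ⟨aux_s_surj_discrete Q hbij.2, hbij⟩
    · -- R ≅ Q, so P is a starter
      have hn : R.n = Q.n := by
        have := Fintype.card_congr e
        simpa using this
      have hP : P.m = P.n := by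
        have := aux_card_eq d
        omega
      have hbij : Function.Bijective P.t := by
        rw [Fintype.bijective_iff_injective_and_card]
        exact ⟨P.t_inj, by simpa using hP⟩
      exact Or.inl ⟨aux_t_surj_discrete P hbij.2, hbij⟩
  · rintro (⟨hPd, hPt⟩ | ⟨hQd, hQs⟩)
    · -- P starter: g is a bijection and R ≅ Q
      have gsurj : Function.Surjective d.g := by
        intro x
        rcases d.cover x with ⟨a, ha⟩ | ⟨b, hb⟩
        · obtain ⟨i, rfl⟩ := hPt.2 a
          exact ⟨Q.s (Fin.cast d.hg i), by rw [← d.agree]; exact ha⟩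
        · exact ⟨b, hb⟩
      have gbij : Function.Bijective d.g := ⟨d.g_inj, gsurj⟩
      let e := Equiv.ofBijective d.g gbij
      refine Or.inr ⟨e.symm, ?_⟩
      intro x y
      obtain ⟨a, rfl⟩ := gsurj x
      obtain ⟨b, rfl⟩ := gsurj y
      have ea : e.symm (d.g a) = a := e.symm_apply_apply a
      have eb : e.symm (d.g b) = b := e.symm_apply_apply b
      rw [ea, eb]
      constructor
      · intro hlt
        rw [d.order] at hlt
        rcases hlt with ⟨a', b', _, _, hlt⟩ | ⟨a', b', ha, hb, hlt⟩ |
          ⟨a', b', ha, _, hnt, _⟩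
        · exact absurd hlt (hPd a' b')
        · rwa [d.g_inj ha, d.g_inj hb] at hlt
        · obtain ⟨i, rfl⟩ := hPt.2 a'
          exact absurd rfl (hnt i)
      · intro hlt
        rw [d.order]
        exact Or.inr (Or.inl ⟨a, b, rfl, rfl, hlt⟩)
    · -- Q terminator: f is a bijection and R ≅ P
      have fsurj : Function.Surjective d.f := by
        intro x
        rcases d.cover x with ⟨a, ha⟩ | ⟨b, hb⟩
        · exact ⟨a, ha⟩
        · obtain ⟨j, rfl⟩ := hQs.2 b
          refine ⟨P.t (Fin.cast d.hg.symm j), ?_⟩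
          rw [d.agree]
          have : Fin.cast d.hg (Fin.cast d.hg.symm j) = j := rfl
          rw [this]; exact hb
      have fbij : Function.Bijective d.f := ⟨d.f_inj, fsurj⟩
      let e := Equiv.ofBijective d.f fbij
      refine Or.inl ⟨e.symm, ?_⟩
      intro x y
      obtain ⟨a, rfl⟩ := fsurj x
      obtain ⟨b, rfl⟩ := fsurj y
      have ea : e.symm (d.f a) = a := e.symm_apply_apply a
      have eb : e.symm (d.f b) = b := e.symm_apply_apply b
      rw [ea, eb]
      constructor
      · intro hlt
        rw [d.order] at hlt
        rcases hlt with ⟨a', b', ha, hb, hlt⟩ | ⟨a', b', _, _, hlt⟩ |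
          ⟨a', b', _, hb, _, hns⟩
        · rwa [d.f_inj ha, d.f_inj hb] at hlt
        · exact absurd hlt (hQd a' b')
        · obtain ⟨j, rfl⟩ := hQs.2 b'
          exact absurd rfl (hns j)
      · intro hlt
        rw [d.order]
        exact Or.inl ⟨a, b, rfl, rfl, hlt⟩
end

section
/- Let P = P₁*P₂ be a nontrivial gluing of iposets. Then the minimal elements of P are exactly (the images of) the minimal elements of P₁, and the maximal elements of P are exactly (the images of) the maximal elements of P₂. Consequently, P is left Winkowski iff P₁ is, P is right Winkowski iff P₂ is, and P is Winkowski iff P₁ is left Winkowski and P₂ is right Winkowski. -/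
open Iposet in
/-- For a nontrivial gluing `R = P * Q` (exhibited by the data `Dt`), the
minimal elements of `R` are exactly the images of the minimal elements of
`P`, and the maximal elements of `R` are exactly the images of the maximal
elements of `Q`.  Consequently `R` is left Winkowski iff `P` is, right
Winkowski iff `Q` is, and Winkowski iff `P` is left Winkowski and `Q` is
right Winkowski. -/
theorem gluing_winkowski (P Q R : Iposet) (Dt : GluingData P Q R)
    (hP : ¬ Starter P) (hQ : ¬ Terminator Q) :
    (∀ x, IsMinEl R x ↔ ∃ a, IsMinEl P a ∧ Dt.f a = x) ∧
    (∀ x, IsMaxEl R x ↔ ∃ b, IsMaxEl Q b ∧ Dt.g b = x) ∧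
    (LeftWink R ↔ LeftWink P) ∧
    (RightWink R ↔ RightWink Q) ∧
    (Wink R ↔ (LeftWink P ∧ RightWink Q)) := by
  -- P has a non-target-interface point
  have hPnt : ∃ a : Fin P.n, ∀ i, a ≠ P.t i := by
    by_contra h
    push_neg at h
    apply hP
    constructor
    · intro x y hxy
      obtain ⟨i, hi⟩ := h x
      exact P.t_max i y (hi ▸ hxy)
    · refine ⟨P.t_inj, fun x => ?_⟩
      obtain ⟨i, hi⟩ := h x
      exact ⟨i, hi.symm⟩
  -- Q has a non-source-interface point
  have hQnt : ∃ b : Fin Q.n, ∀ j, b ≠ Q.s j := by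
    by_contra h
    push_neg at h
    apply hQ
    constructor
    · intro x y hxy
      obtain ⟨j, hj⟩ := h y
      exact Q.s_min j x (hj ▸ hxy)
    · refine ⟨Q.s_inj, fun x => ?_⟩
      obtain ⟨j, hj⟩ := h x
      exact ⟨j, hj.symm⟩
  have minf : ∀ x, IsMinEl R x ↔ ∃ a, IsMinEl P a ∧ Dt.f a = x := by
    intro x
    constructor
    · intro hx
      rcases Dt.cover x with ⟨a, ha⟩ | ⟨b, hb⟩
      · exact ⟨a, fun a' ha' =>
          hx (Dt.f a') ((Dt.order _ _).mpr (Or.inl ⟨a', a, rfl, ha, ha'⟩)), ha⟩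
      · by_cases hbs : ∃ j, Q.s j = b
        · obtain ⟨j, hj⟩ := hbs
          have hfx : Dt.f (P.t (Fin.cast Dt.hg.symm j)) = x := by
            rw [Dt.agree]; simp [hj, hb]
          exact ⟨_, fun a' ha' =>
            hx (Dt.f a') ((Dt.order _ _).mpr (Or.inl ⟨a', _, rfl, hfx, ha'⟩)), hfx⟩
        · push_neg at hbs
          obtain ⟨a, hai⟩ := hPnt
          exact absurd ((Dt.order _ _).mpr (Or.inr (Or.inr
            ⟨a, b, rfl, hb, hai, fun j h => hbs j h.symm⟩))) (hx _)
    · rintro ⟨a, hamin, rfl⟩ y hy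
      rcases (Dt.order _ _).mp hy with ⟨a', b', h1, h2, h3⟩ | ⟨a', b', h1, h2, h3⟩ |
        ⟨a', b', h1, h2, h3, h4⟩
      · exact hamin a' (Dt.f_inj h2 ▸ h3)
      · obtain ⟨i, hi⟩ := Dt.overlap a b' h2.symm
        have : b' = Q.s (Fin.cast Dt.hg i) :=
          Dt.g_inj (by rw [h2, hi, Dt.agree])
        exact Q.s_min _ a' (this ▸ h3)
      · obtain ⟨i, hi⟩ := Dt.overlap a b' h2.symm
        exact h4 _ (Dt.g_inj (by rw [h2, hi, Dt.agree]))
  have maxg : ∀ x, IsMaxEl R x ↔ ∃ b, IsMaxEl Q b ∧ Dt.g b = x := by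
    intro x
    constructor
    · intro hx
      rcases Dt.cover x with ⟨a, ha⟩ | ⟨b, hb⟩
      · by_cases has : ∃ i, P.t i = a
        · obtain ⟨i, hi⟩ := has
          have hgx : Dt.g (Q.s (Fin.cast Dt.hg i)) = x := by
            rw [← Dt.agree, hi, ha]
          exact ⟨_, fun b' hb' =>
            hx (Dt.g b') ((Dt.order _ _).mpr (Or.inr (Or.inl ⟨_, b', hgx, rfl, hb'⟩))), hgx⟩
        · push_neg at has
          obtain ⟨b, hbj⟩ := hQnt
          exact absurd ((Dt.order _ _).mpr (Or.inr (Or.inr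
            ⟨a, b, ha, rfl, fun i h => has i h.symm, hbj⟩))) (hx _)
      · exact ⟨b, fun b' hb' =>
          hx (Dt.g b') ((Dt.order _ _).mpr (Or.inr (Or.inl ⟨b, b', hb, rfl, hb'⟩))), hb⟩
    · rintro ⟨b, hbmax, rfl⟩ y hy
      rcases (Dt.order _ _).mp hy with ⟨a', b', h1, h2, h3⟩ | ⟨a', b', h1, h2, h3⟩ |
        ⟨a', b', h1, h2, h3, h4⟩
      · obtain ⟨i, hi⟩ := Dt.overlap a' b h1
        exact P.t_max i b' (hi ▸ h3)
      · exact hbmax b' (Dt.g_inj h1 ▸ h3)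
      · obtain ⟨i, hi⟩ := Dt.overlap a' b h1
        exact h3 i hi
  have lw : LeftWink R ↔ LeftWink P := by
    constructor
    · intro hR a
      constructor
      · intro ha
        obtain ⟨i, hi⟩ := (hR (Dt.f a)).mp ((minf _).mpr ⟨a, ha, rfl⟩)
        exact ⟨_, Dt.f_inj (by rw [← Dt.s_eq, hi])⟩
      · rintro ⟨i, rfl⟩
        exact fun y => P.s_min i y
    · intro hP' x
      constructor
      · intro hx
        obtain ⟨a, ha, rfl⟩ := (minf x).mp hx
        obtain ⟨j, hj⟩ := (hP' a).mp ha
        refine ⟨Fin.cast Dt.hk.symm j, ?_⟩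
        rw [Dt.s_eq]
        simp [hj]
      · rintro ⟨i, rfl⟩
        rw [Dt.s_eq]
        exact (minf _).mpr ⟨_, fun y => P.s_min _ y, rfl⟩
  have rw' : RightWink R ↔ RightWink Q := by
    constructor
    · intro hR b
      constructor
      · intro hb
        obtain ⟨i, hi⟩ := (hR (Dt.g b)).mp ((maxg _).mpr ⟨b, hb, rfl⟩)
        exact ⟨_, Dt.g_inj (by rw [← Dt.t_eq, hi])⟩
      · rintro ⟨i, rfl⟩
        exact fun y => Q.t_max i y
    · intro hQ' x
      constructor
      · intro hx
        obtain ⟨b, hb, rfl⟩ := (maxg x).mp hx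
        obtain ⟨j, hj⟩ := (hQ' b).mp hb
        refine ⟨Fin.cast Dt.hm.symm j, ?_⟩
        rw [Dt.t_eq]
        simp [hj]
      · rintro ⟨i, rfl⟩
        rw [Dt.t_eq]
        exact (maxg _).mpr ⟨_, fun y => Q.t_max _ y, rfl⟩
  exact ⟨minf, maxg, lw, rw', and_congr lw rw'⟩
end
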